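/- arXiv:2007.09840 — 5 statements merged into one kernel-verified Lean document; each statement's English description precedes it below -/
import Mathlib

section
/- Let n ≥ 1, 1 ≤ p₁ < ∞ and 0 ≤ μ₁ < n. If φ ∈ L¹(ℝⁿ) and g ∈ M_{p₁,μ₁}(ℝⁿ), then the convolution φ ∗ g belongs to M_{p₁,μ₁}(ℝⁿ) and ‖φ ∗ g‖_{p₁,μ₁} ≤ ‖φ‖_{L¹} ‖g‖_{p₁,μ₁} (Young's inequality for convolution in Morrey spaces). -/
open MeasureTheory ENNReal

noncomputable section

abbrev En (n : ℕ) := EuclideanSpace ℝ (Fin n)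

/-- The homogeneous Morrey norm `‖f‖_{q,μ} = sup_{x₀, d>0} d^{-μ/q} ‖f‖_{L^q(B_d(x₀))}`. -/
noncomputable def morreyNorm {n : ℕ} {F : Type*} [NormedAddCommGroup F]
    (q μ : ℝ) (f : En n → F) : ℝ≥0∞ :=
  ⨆ (x₀ : En n) (d : ℝ) (_ : 0 < d),
    ENNReal.ofReal (d ^ (-(μ / q))) *
      eLpNorm f (ENNReal.ofReal q) (volume.restrict (Metric.ball x₀ d))

/-- Averaged Hölder/Jensen inequality: `(∫ w u)^p ≤ (∫ w)^(p-1) * ∫ w u^p`. -/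
lemma holder_avg {α : Type*} [MeasurableSpace α] (μ : Measure α) {p : ℝ} (hp : 1 ≤ p)
    {w u : α → ℝ≥0∞} (hw : AEMeasurable w μ) (hu : AEMeasurable u μ) :
    (∫⁻ y, w y * u y ∂μ) ^ p ≤ (∫⁻ y, w y ∂μ) ^ (p - 1) * ∫⁻ y, w y * u y ^ p ∂μ := by
  rcases eq_or_lt_of_le hp with rfl | hp1
  · simp
  · have hp0 : p ≠ 0 := by positivity
    have hpq : p.HolderConjugate p.conjExponent := Real.HolderConjugate.conjExponent hp1
    set q : ℝ := p.conjExponent with hqdef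
    have hq0 : q ≠ 0 := hpq.symm.ne_zero
    have key := ENNReal.lintegral_mul_le_Lp_mul_Lq μ hpq
      (f := fun y => w y ^ (1/p) * u y) (g := fun y => w y ^ (1/q))
      ((hw.pow_const _).mul hu) (hw.pow_const _)
    have e1 : ∀ y, ((fun y => w y ^ (1/p) * u y) * fun y => w y ^ (1/q)) y = w y * u y := by
      intro y
      have : w y ^ (1/p) * w y ^ (1/q) = w y := by
        have hppos : (0:ℝ) < p := lt_trans one_pos hp1
        have hqpos : (0:ℝ) < q := hpq.symm.pos
        rw [← ENNReal.rpow_add_of_nonneg (1/p) (1/q) (by positivity) (by positivity)]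
        rw [one_div, one_div, hpq.inv_add_inv_eq_one, ENNReal.rpow_one]
      simp only [Pi.mul_apply]
      calc w y ^ (1/p) * u y * w y ^ (1/q) = (w y ^ (1/p) * w y ^ (1/q)) * u y := by ring
        _ = w y * u y := by rw [this]
    have e2 : ∀ y, (w y ^ (1/p) * u y) ^ p = w y * u y ^ p := by
      intro y
      rw [ENNReal.mul_rpow_of_nonneg _ _ (by positivity), ← ENNReal.rpow_mul,
        one_div_mul_cancel hp0, ENNReal.rpow_one]
    have e3 : ∀ y, (w y ^ (1/q)) ^ q = w y := by
      intro y
      rw [← ENNReal.rpow_mul, one_div_mul_cancel hq0, ENNReal.rpow_one]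
    simp only [e1, e2, e3] at key
    have key2 := ENNReal.rpow_le_rpow key (le_of_lt (lt_trans one_pos hp1))
    refine le_trans key2 (le_of_eq ?_)
    rw [ENNReal.mul_rpow_of_nonneg _ _ (le_of_lt (lt_trans one_pos hp1)),
      ← ENNReal.rpow_mul, ← ENNReal.rpow_mul, one_div_mul_cancel hp0, ENNReal.rpow_one]
    have hqp : 1/q * p = p - 1 := by
      rw [hpq.conjugate_eq]
      field_simp
    rw [hqp, mul_comm]

/-- Young's inequality for convolution in Morrey spaces:
if `φ ∈ L¹(ℝⁿ)` and `g ∈ M_{p₁,μ₁}(ℝⁿ)`, then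
`‖φ ∗ g‖_{p₁,μ₁} ≤ ‖φ‖_{L¹} ‖g‖_{p₁,μ₁}`. -/
theorem morrey_young {n : ℕ} (hn : 1 ≤ n) (p₁ μ₁ : ℝ)
    (hp₁ : 1 ≤ p₁) (hμ₁ : 0 ≤ μ₁) (hμ₁' : μ₁ < n)
    (φ g : En n → ℂ)
    (hφ : Integrable φ volume)
    (hgm : AEStronglyMeasurable g volume)
    (hg : morreyNorm p₁ μ₁ g < ⊤) :
    morreyNorm p₁ μ₁ (fun x => ∫ y : En n, φ y * g (x - y)) < ⊤ ∧
      morreyNorm p₁ μ₁ (fun x => ∫ y : En n, φ y * g (x - y)) ≤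
        eLpNorm φ 1 volume * morreyNorm p₁ μ₁ g := by
  have hp₁0 : (0:ℝ) < p₁ := lt_of_lt_of_le one_pos hp₁
  set A : ℝ≥0∞ := ∫⁻ y, (‖φ y‖₊ : ℝ≥0∞) ∂volume with hAdef
  have hAeq : eLpNorm φ 1 volume = A := eLpNorm_one_eq_lintegral_enorm
  have hAtop : A ≠ ⊤ := by
    rw [← hAeq]; exact (memLp_one_iff_integrable.mpr hφ).eLpNorm_ne_top
  have hφm : AEMeasurable (fun y => (‖φ y‖₊ : ℝ≥0∞)) volume := hφ.aestronglyMeasurable.enorm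
  set p : ℝ≥0∞ := ENNReal.ofReal p₁ with hpdef
  have hp0 : p ≠ 0 := by
    simp only [hpdef, ne_eq, ENNReal.ofReal_eq_zero, not_le]; exact hp₁0
  have hpt : p ≠ ⊤ := ENNReal.ofReal_ne_top
  have hpr : p.toReal = p₁ := ENNReal.toReal_ofReal hp₁0.le
  set M : ℝ≥0∞ := morreyNorm p₁ μ₁ g with hMdef
  set a : ℝ := μ₁ / p₁ with hadef
  -- key bound per ball
  have key : ∀ (x₀ : En n) (d : ℝ), 0 < d →
      ENNReal.ofReal (d ^ (-a)) *
        eLpNorm (fun x => ∫ y : En n, φ y * g (x - y)) p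
          (volume.restrict (Metric.ball x₀ d)) ≤ A * M := by
    intro x₀ d hd
    have hcan : ENNReal.ofReal (d ^ (-a)) * ENNReal.ofReal (d ^ a) = 1 := by
      rw [← ENNReal.ofReal_mul (by positivity), ← Real.rpow_add hd]
      norm_num
    have hcan' : ENNReal.ofReal (d ^ a) * ENNReal.ofReal (d ^ (-a)) = 1 := by
      rw [mul_comm]; exact hcan
    -- the Morrey bound on each translated ball
    have hball : ∀ y : En n,
        (∫⁻ x in Metric.ball (x₀ - y) d, (‖g x‖₊ : ℝ≥0∞) ^ p₁ ∂volume)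
          ≤ (ENNReal.ofReal (d ^ a) * M) ^ p₁ := by
      intro y
      have hM : ENNReal.ofReal (d ^ (-a)) *
          eLpNorm g p (volume.restrict (Metric.ball (x₀ - y) d)) ≤ M := by
        rw [hMdef]
        unfold morreyNorm
        exact le_iSup_of_le (x₀ - y) (le_iSup_of_le d (le_iSup_of_le hd le_rfl))
      have h1 : eLpNorm g p (volume.restrict (Metric.ball (x₀ - y) d))
          ≤ ENNReal.ofReal (d ^ a) * M := by
        calc eLpNorm g p (volume.restrict (Metric.ball (x₀ - y) d))
            = (ENNReal.ofReal (d ^ a) * ENNReal.ofReal (d ^ (-a))) *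
              eLpNorm g p (volume.restrict (Metric.ball (x₀ - y) d)) := by
              rw [hcan', one_mul]
          _ = ENNReal.ofReal (d ^ a) * (ENNReal.ofReal (d ^ (-a)) *
              eLpNorm g p (volume.restrict (Metric.ball (x₀ - y) d))) := by ring
          _ ≤ ENNReal.ofReal (d ^ a) * M := mul_le_mul_right hM _
      have h2 : (∫⁻ x in Metric.ball (x₀ - y) d, (‖g x‖₊ : ℝ≥0∞) ^ p₁ ∂volume)
          = (eLpNorm g p (volume.restrict (Metric.ball (x₀ - y) d))) ^ p₁ := by
        rw [eLpNorm_eq_lintegral_rpow_enorm_toReal hp0 hpt, hpr, ← ENNReal.rpow_mul,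
          one_div_mul_cancel (ne_of_gt hp₁0), ENNReal.rpow_one]
        rfl
      rw [h2]
      exact ENNReal.rpow_le_rpow h1 hp₁0.le
    -- translation of the inner integral
    have htrans : ∀ y : En n,
        (∫⁻ x in Metric.ball x₀ d, (‖g (x - y)‖₊ : ℝ≥0∞) ^ p₁ ∂volume)
          = ∫⁻ x in Metric.ball (x₀ - y) d, (‖g x‖₊ : ℝ≥0∞) ^ p₁ ∂volume := by
      intro y
      have hpre : (fun x : En n => x - y) ⁻¹' (Metric.ball (x₀ - y) d)
          = Metric.ball x₀ d := by
        ext z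
        simp [Metric.mem_ball, dist_sub_right]
      have hmp : MeasurePreserving (fun x : En n => x - y)
          (volume.restrict (Metric.ball x₀ d))
          (volume.restrict (Metric.ball (x₀ - y) d)) := by
        have := (measurePreserving_sub_right (volume : Measure (En n)) y).restrict_preimage
          (measurableSet_ball (x := x₀ - y) (ε := d))
        rwa [hpre] at this
      rw [← hmp.map_eq, lintegral_map' ?_ ?_]
      · rw [hmp.map_eq]
        exact ((hgm.restrict.enorm).pow_const p₁)
      · exact (measurable_id.sub_const y).aemeasurable
    -- measurability for each fixed x
    have hu : ∀ x : En n, AEMeasurable (fun y => (‖g (x - y)‖₊ : ℝ≥0∞)) volume := by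
      intro x
      have hsl : MeasurePreserving (fun y : En n => x - y) volume volume := by
        have h1 : MeasurePreserving (fun y : En n => x + -y) volume volume :=
          (measurePreserving_add_left volume x).comp (Measure.measurePreserving_neg volume)
        simpa only [← sub_eq_add_neg] using h1
      exact (hgm.comp_quasiMeasurePreserving hsl.quasiMeasurePreserving).enorm
    -- product measurability for Tonelli
    have hprod : AEMeasurable
        (Function.uncurry fun x y => (‖φ y‖₊ : ℝ≥0∞) * (‖g (x - y)‖₊ : ℝ≥0∞) ^ p₁)
        ((volume.restrict (Metric.ball x₀ d)).prod volume) := by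
      have hsub : Measure.QuasiMeasurePreserving (fun z : En n × En n => z.1 - z.2)
          ((volume.restrict (Metric.ball x₀ d)).prod volume) volume :=
        (quasiMeasurePreserving_sub (volume : Measure (En n)) volume).mono_left
          (Measure.AbsolutelyContinuous.prod
            Measure.restrict_le_self.absolutelyContinuous
            (Measure.AbsolutelyContinuous.refl _))
      have h1 : AEMeasurable (fun z : En n × En n => (‖g (z.1 - z.2)‖₊ : ℝ≥0∞))
          ((volume.restrict (Metric.ball x₀ d)).prod volume) :=
        (hgm.comp_quasiMeasurePreserving hsub).enorm
      have h2 : AEMeasurable (fun z : En n × En n => (‖φ z.2‖₊ : ℝ≥0∞))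
          ((volume.restrict (Metric.ball x₀ d)).prod volume) :=
        hφm.comp_quasiMeasurePreserving Measure.quasiMeasurePreserving_snd
      exact h2.mul (h1.pow_const p₁)
    -- main chain
    have hAp : A ^ (p₁ - 1) ≠ ⊤ :=
      (ENNReal.rpow_lt_top_of_nonneg (by linarith) hAtop).ne
    have chain : (∫⁻ x in Metric.ball x₀ d,
        (‖∫ y : En n, φ y * g (x - y)‖₊ : ℝ≥0∞) ^ p₁ ∂volume)
        ≤ A ^ p₁ * (ENNReal.ofReal (d ^ a) * M) ^ p₁ := by
      calc (∫⁻ x in Metric.ball x₀ d, (‖∫ y : En n, φ y * g (x - y)‖₊ : ℝ≥0∞) ^ p₁ ∂volume)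
          ≤ ∫⁻ x in Metric.ball x₀ d,
              (∫⁻ y, (‖φ y‖₊ : ℝ≥0∞) * (‖g (x - y)‖₊ : ℝ≥0∞) ∂volume) ^ p₁ ∂volume := by
            refine lintegral_mono fun x => ENNReal.rpow_le_rpow ?_ hp₁0.le
            calc ((‖∫ y : En n, φ y * g (x - y)‖₊ : ℝ≥0∞))
                ≤ ∫⁻ y, (‖φ y * g (x - y)‖₊ : ℝ≥0∞) ∂volume :=
                  enorm_integral_le_lintegral_enorm _
              _ = ∫⁻ y, (‖φ y‖₊ : ℝ≥0∞) * (‖g (x - y)‖₊ : ℝ≥0∞) ∂volume := by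
                  simp [nnnorm_mul]
        _ ≤ ∫⁻ x in Metric.ball x₀ d,
              A ^ (p₁ - 1) * ∫⁻ y, (‖φ y‖₊ : ℝ≥0∞) * (‖g (x - y)‖₊ : ℝ≥0∞) ^ p₁ ∂volume
              ∂volume :=
            lintegral_mono fun x => holder_avg volume hp₁ hφm (hu x)
        _ = A ^ (p₁ - 1) * ∫⁻ x in Metric.ball x₀ d,
              ∫⁻ y, (‖φ y‖₊ : ℝ≥0∞) * (‖g (x - y)‖₊ : ℝ≥0∞) ^ p₁ ∂volume ∂volume :=
            lintegral_const_mul' _ _ hAp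
        _ = A ^ (p₁ - 1) * ∫⁻ y, ∫⁻ x in Metric.ball x₀ d,
              (‖φ y‖₊ : ℝ≥0∞) * (‖g (x - y)‖₊ : ℝ≥0∞) ^ p₁ ∂volume ∂volume := by
            rw [lintegral_lintegral_swap hprod]
        _ ≤ A ^ (p₁ - 1) * ∫⁻ y, (‖φ y‖₊ : ℝ≥0∞) *
              (ENNReal.ofReal (d ^ a) * M) ^ p₁ ∂volume := by
            refine mul_le_mul_right (lintegral_mono fun y => ?_) _
            rw [lintegral_const_mul' _ _ ENNReal.coe_ne_top]
            refine mul_le_mul_right ?_ _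
            rw [htrans y]
            exact hball y
        _ = A ^ (p₁ - 1) * (A * (ENNReal.ofReal (d ^ a) * M) ^ p₁) := by
            rw [lintegral_mul_const'' _ hφm]
        _ = A ^ p₁ * (ENNReal.ofReal (d ^ a) * M) ^ p₁ := by
            have hA1 : A ^ (p₁ - 1) * A = A ^ p₁ := by
              nth_rewrite 2 [← ENNReal.rpow_one A]
              rw [← ENNReal.rpow_add_of_nonneg (p₁ - 1) 1 (by linarith) zero_le_one]
              norm_num
            rw [← mul_assoc, hA1]
    have hsn : eLpNorm (fun x => ∫ y : En n, φ y * g (x - y)) p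
        (volume.restrict (Metric.ball x₀ d)) ≤ A * (ENNReal.ofReal (d ^ a) * M) := by
      rw [eLpNorm_eq_lintegral_rpow_enorm_toReal hp0 hpt, hpr]
      calc (∫⁻ x in Metric.ball x₀ d,
            (‖∫ y : En n, φ y * g (x - y)‖₊ : ℝ≥0∞) ^ p₁ ∂volume) ^ (1 / p₁)
          ≤ (A ^ p₁ * (ENNReal.ofReal (d ^ a) * M) ^ p₁) ^ (1 / p₁) :=
            ENNReal.rpow_le_rpow chain (by positivity)
        _ = A * (ENNReal.ofReal (d ^ a) * M) := by
            rw [ENNReal.mul_rpow_of_nonneg _ _ (by positivity), ← ENNReal.rpow_mul,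
              ← ENNReal.rpow_mul, mul_one_div, div_self (ne_of_gt hp₁0),
              ENNReal.rpow_one, ENNReal.rpow_one]
    calc ENNReal.ofReal (d ^ (-a)) *
          eLpNorm (fun x => ∫ y : En n, φ y * g (x - y)) p
            (volume.restrict (Metric.ball x₀ d))
        ≤ ENNReal.ofReal (d ^ (-a)) * (A * (ENNReal.ofReal (d ^ a) * M)) :=
          mul_le_mul_right hsn _
      _ = (ENNReal.ofReal (d ^ (-a)) * ENNReal.ofReal (d ^ a)) * (A * M) := by ring
      _ = A * M := by rw [hcan, one_mul]
  have hle : morreyNorm p₁ μ₁ (fun x => ∫ y : En n, φ y * g (x - y)) ≤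
      eLpNorm φ 1 volume * morreyNorm p₁ μ₁ g := by
    rw [hAeq, ← hMdef]
    unfold morreyNorm
    exact iSup_le fun x₀ => iSup_le fun d => iSup_le fun hd => key x₀ d hd
  refine ⟨lt_of_le_of_lt hle ?_, hle⟩
  rw [hAeq, ← hMdef]
  exact ENNReal.mul_lt_top (lt_of_le_of_ne le_top hAtop) hg

end
end

section
/- Let n ≥ 1, 1 ≤ p₂ ≤ p₁ < ∞ and 0 ≤ μ₁, μ₂ < n be such that (n − μ₁)/p₁ ≤ (n − μ₂)/p₂, let β be a multi-index and A > 0. Then there is a constant C > 0, depending only on n, A, β, p₁, p₂, μ₁, μ₂ and independent of j and g, such that for every j ∈ ℤ and every g ∈ M_{p₁,μ₁}(ℝⁿ) whose support is contained in {ξ ∈ ℝⁿ : |ξ| ≤ A·2^j}, one has the Bernstein-type inequality ‖ξ^β g‖_{p₂,μ₂} ≤ C · 2^{j|β| + j((n−μ₂)/p₂ − (n−μ₁)/p₁)} ‖g‖_{p₁,μ₁}. (Applied in the paper with g = f̂ for f with supp f̂ ⊂ {|ξ| ≤ A·2^j}.) -/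
open MeasureTheory ENNReal

noncomputable section

lemma abs_coord_le_norm {n : ℕ} (ξ : En n) (i : Fin n) : |ξ i| ≤ ‖ξ‖ := by
  rw [EuclideanSpace.norm_eq, ← Real.sqrt_sq_eq_abs]
  apply Real.sqrt_le_sqrt
  have : ξ i ^ 2 = ‖ξ i‖ ^ 2 := by simp [Real.norm_eq_abs, sq_abs]
  rw [this]
  exact Finset.single_le_sum (f := fun i => ‖ξ i‖ ^ 2) (fun i _ => sq_nonneg _)
    (Finset.mem_univ i)

lemma morrey_ball_le {n : ℕ} {F : Type*} [NormedAddCommGroup F] (q μ : ℝ) (f : En n → F)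
    (x₀ : En n) {d : ℝ} (hd : 0 < d) :
    ENNReal.ofReal (d ^ (-(μ / q))) *
      eLpNorm f (ENNReal.ofReal q) (volume.restrict (Metric.ball x₀ d)) ≤
    morreyNorm q μ f := by
  refine le_trans ?_ (le_iSup _ x₀)
  refine le_trans ?_ (le_iSup _ d)
  exact le_iSup (fun _ : 0 < d => ENNReal.ofReal (d ^ (-(μ / q))) *
      eLpNorm f (ENNReal.ofReal q) (volume.restrict (Metric.ball x₀ d))) hd

/-- Bernstein-type inequality in Morrey spaces: if `supp g ⊆ {|ξ| ≤ A·2^j}`, then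
`‖ξ^β g‖_{p₂,μ₂} ≤ C 2^{j|β| + j((n−μ₂)/p₂ − (n−μ₁)/p₁)} ‖g‖_{p₁,μ₁}`,
with `C` independent of `j` and `g`. -/
theorem morrey_bernstein {n : ℕ} (hn : 1 ≤ n) (p₁ p₂ μ₁ μ₂ : ℝ)
    (hp₂ : 1 ≤ p₂) (hp : p₂ ≤ p₁)
    (hμ₁ : 0 ≤ μ₁) (hμ₁' : μ₁ < n) (hμ₂ : 0 ≤ μ₂) (hμ₂' : μ₂ < n)
    (hreg : (n - μ₁) / p₁ ≤ (n - μ₂) / p₂)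
    (β : Fin n → ℕ) (A : ℝ) (hA : 0 < A) :
    ∃ C > (0 : ℝ), ∀ (j : ℤ) (g : En n → ℂ),
      AEStronglyMeasurable g volume →
      morreyNorm p₁ μ₁ g < ⊤ →
      (∀ ξ : En n, g ξ ≠ 0 → ‖ξ‖ ≤ A * 2 ^ j) →
      morreyNorm p₂ μ₂ (fun ξ => (∏ i, ((ξ i : ℝ) : ℂ) ^ β i) * g ξ) ≤
        ENNReal.ofReal
          (C * (2 : ℝ) ^ ((j : ℝ) * (∑ i, (β i : ℝ)) +
            (j : ℝ) * ((n - μ₂) / p₂ - (n - μ₁) / p₁))) *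
          morreyNorm p₁ μ₁ g := by
  have hp₂0 : (0:ℝ) < p₂ := lt_of_lt_of_le one_pos hp₂
  have hp₁0 : (0:ℝ) < p₁ := lt_of_lt_of_le hp₂0 hp
  haveI : Nontrivial (En n) := by
    refine ⟨⟨0, EuclideanSpace.single ⟨0, hn⟩ 1, fun h => ?_⟩⟩
    have := congrArg (fun v : En n => v ⟨0, hn⟩) h
    simp [EuclideanSpace.single_apply] at this
  set θ : ℝ := 1/p₂ - 1/p₁ with hθdef
  have hθ : 0 ≤ θ := sub_nonneg.2 (one_div_le_one_div_of_le hp₂0 hp)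
  set e : ℝ := ((n : ℝ) - μ₂) / p₂ - ((n : ℝ) - μ₁) / p₁ with hedef
  have he : 0 ≤ e := sub_nonneg.2 hreg
  set ω : ℝ := (volume (Metric.ball (0 : En n) 1)).toReal with hωdef
  have hω : 0 < ω :=
    ENNReal.toReal_pos (Metric.measure_ball_pos volume 0 one_pos).ne' measure_ball_lt_top.ne
  set k : ℕ := ∑ i, β i with hkdef
  refine ⟨A ^ k * ω ^ θ * (2*A) ^ e, by positivity, ?_⟩
  intro j g hg _ hsupp
  set R : ℝ := A * 2 ^ j with hRdef
  have hR : 0 < R := by positivity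
  set c : ℝ := (A ^ k * ω ^ θ * (2*A) ^ e) *
      (2:ℝ) ^ ((j : ℝ) * (∑ i, (β i : ℝ)) + (j : ℝ) * e) with hcdef
  have hc : 0 ≤ c := by positivity
  set fβ : En n → ℂ := fun ξ => (∏ i, ((ξ i : ℝ) : ℂ) ^ β i) * g ξ with hfβ
  -- rewrite powers of 2
  have h2j : ∀ t : ℝ, ((2:ℝ)^j) ^ t = (2:ℝ) ^ ((j:ℝ) * t) := by
    intro t
    rw [← Real.rpow_intCast 2 j, ← Real.rpow_mul (by norm_num)]
  have hRk : R ^ k = A ^ k * (2:ℝ) ^ ((j:ℝ) * (k:ℝ)) := by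
    rw [hRdef, mul_pow, ← Real.rpow_natCast ((2:ℝ)^j) k, h2j]
  have hsumk : (∑ i, (β i : ℝ)) = (k : ℝ) := by
    rw [hkdef]; push_cast; ring
  -- key per-ball estimate, valid for d ≤ 2R
  have key : ∀ (x₀ : En n) (d : ℝ), 0 < d → d ≤ 2*R →
      ENNReal.ofReal (d ^ (-(μ₂ / p₂))) *
        eLpNorm fβ (ENNReal.ofReal p₂) (volume.restrict (Metric.ball x₀ d)) ≤
      ENNReal.ofReal c * morreyNorm p₁ μ₁ g := by
    intro x₀ d hd hd2
    set ν := volume.restrict (Metric.ball x₀ d) with hν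
    -- step 1: multiplier bound
    have hpt : ∀ ξ, ‖fβ ξ‖ ≤ ‖(((R:ℂ)^k) • g) ξ‖ := by
      intro ξ
      by_cases hξ : g ξ = 0
      · simp [hfβ, hξ]
      · have hnorm : ‖ξ‖ ≤ R := hsupp ξ hξ
        simp only [hfβ, Pi.smul_apply, smul_eq_mul, norm_mul]
        gcongr
        calc ‖∏ i, ((ξ i : ℝ):ℂ) ^ β i‖ = ∏ i, |ξ i| ^ β i := by
              rw [norm_prod]
              refine Finset.prod_congr rfl fun i _ => ?_
              rw [norm_pow, Complex.norm_real, Real.norm_eq_abs]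
          _ ≤ ∏ i, R ^ β i := by
              refine Finset.prod_le_prod (fun i _ => by positivity) fun i _ => ?_
              exact pow_le_pow_left₀ (abs_nonneg _) ((abs_coord_le_norm ξ i).trans hnorm) _
          _ = R ^ k := by rw [hkdef, Finset.prod_pow_eq_pow_sum]
          _ = ‖((R:ℂ))^k‖ := by
              rw [norm_pow, Complex.norm_real, Real.norm_eq_abs, abs_of_pos hR]
          _ = ‖((R:ℂ)^k)‖ := by rw [norm_pow]
    have step1 : eLpNorm fβ (ENNReal.ofReal p₂) ν ≤
        ENNReal.ofReal (R ^ k) * eLpNorm g (ENNReal.ofReal p₂) ν := by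
      calc eLpNorm fβ (ENNReal.ofReal p₂) ν ≤
            eLpNorm (((R:ℂ)^k) • g) (ENNReal.ofReal p₂) ν := eLpNorm_mono hpt
        _ = (‖(R:ℂ)^k‖₊ : ℝ≥0∞) * eLpNorm g (ENNReal.ofReal p₂) ν :=
            eLpNorm_const_smul _ _ _ _
        _ = ENNReal.ofReal (R ^ k) * eLpNorm g (ENNReal.ofReal p₂) ν := by
            congr 1
            rw [← enorm_eq_nnnorm, ← ofReal_norm, norm_pow, Complex.norm_real,
              Real.norm_eq_abs, abs_of_pos hR]
    -- step 2 : Hölder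
    have hvol : (ν Set.univ) ^ (1 / (ENNReal.ofReal p₂).toReal -
        1 / (ENNReal.ofReal p₁).toReal) = ENNReal.ofReal ((d ^ n) ^ θ * ω ^ θ) := by
      rw [hν, Measure.restrict_apply_univ, ENNReal.toReal_ofReal hp₂0.le,
        ENNReal.toReal_ofReal hp₁0.le, ← hθdef,
        Measure.addHaar_ball volume x₀ hd.le, finrank_euclideanSpace_fin,
        ENNReal.mul_rpow_of_nonneg _ _ hθ,
        ENNReal.ofReal_rpow_of_nonneg (by positivity) hθ]
      have hb : volume (Metric.ball (0:En n) 1) = ENNReal.ofReal ω :=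
        (ENNReal.ofReal_toReal measure_ball_lt_top.ne).symm
      rw [hb, ENNReal.ofReal_rpow_of_nonneg hω.le hθ,
        ← ENNReal.ofReal_mul (by positivity)]
    have step2 : eLpNorm g (ENNReal.ofReal p₂) ν ≤
        eLpNorm g (ENNReal.ofReal p₁) ν * ENNReal.ofReal ((d ^ n) ^ θ * ω ^ θ) := by
      rw [← hvol]
      exact eLpNorm_le_eLpNorm_mul_rpow_measure_univ
        (ENNReal.ofReal_le_ofReal hp) hg.restrict
    -- scalar inequality
    have scalar : d ^ (-(μ₂ / p₂)) * (R ^ k * ((d ^ n) ^ θ * ω ^ θ)) ≤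
        c * d ^ (-(μ₁ / p₁)) := by
      have hd2R : d ^ e ≤ (2*A) ^ e * (2:ℝ) ^ ((j:ℝ) * e) := by
        calc d ^ e ≤ (2*R) ^ e := Real.rpow_le_rpow hd.le hd2 he
          _ = ((2*A) * (2:ℝ)^j) ^ e := by rw [hRdef]; ring_nf
          _ = (2*A) ^ e * ((2:ℝ)^j) ^ e :=
              Real.mul_rpow (by positivity) (by positivity)
          _ = (2*A) ^ e * (2:ℝ) ^ ((j:ℝ) * e) := by rw [h2j]
      have hdθ : d ^ (-(μ₂ / p₂)) * (d ^ n) ^ θ = d ^ e * d ^ (-(μ₁ / p₁)) := by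
        rw [← Real.rpow_natCast d n, ← Real.rpow_mul hd.le,
          ← Real.rpow_add hd, ← Real.rpow_add hd]
        congr 1
        rw [hedef, hθdef]
        field_simp
        ring
      calc d ^ (-(μ₂ / p₂)) * (R ^ k * ((d ^ n) ^ θ * ω ^ θ))
          = (d ^ (-(μ₂ / p₂)) * (d ^ n) ^ θ) * (R ^ k * ω ^ θ) := by ring
        _ = d ^ e * d ^ (-(μ₁ / p₁)) * (R ^ k * ω ^ θ) := by rw [hdθ]
        _ ≤ ((2*A) ^ e * (2:ℝ) ^ ((j:ℝ) * e)) * d ^ (-(μ₁ / p₁)) *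
              ((A ^ k * (2:ℝ) ^ ((j:ℝ) * (k:ℝ))) * ω ^ θ) := by
            rw [hRk]
            have h1 : (0:ℝ) ≤ d ^ (-(μ₁ / p₁)) := by positivity
            have h2 : (0:ℝ) ≤ A ^ k * (2:ℝ) ^ ((j:ℝ) * (k:ℝ)) * ω ^ θ := by positivity
            exact mul_le_mul_of_nonneg_right
              (mul_le_mul_of_nonneg_right hd2R h1) h2
        _ = c * d ^ (-(μ₁ / p₁)) := by
            rw [hcdef, hsumk, Real.rpow_add (by norm_num : (0:ℝ) < 2)]
            ring
    -- combine
    calc ENNReal.ofReal (d ^ (-(μ₂ / p₂))) * eLpNorm fβ (ENNReal.ofReal p₂) ν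
        ≤ ENNReal.ofReal (d ^ (-(μ₂ / p₂))) * (ENNReal.ofReal (R ^ k) *
            (eLpNorm g (ENNReal.ofReal p₁) ν * ENNReal.ofReal ((d ^ n) ^ θ * ω ^ θ))) := by
          gcongr
          exact step1.trans (by gcongr)
      _ = ENNReal.ofReal (d ^ (-(μ₂ / p₂)) * (R ^ k * ((d ^ n) ^ θ * ω ^ θ))) *
            eLpNorm g (ENNReal.ofReal p₁) ν := by
          rw [ENNReal.ofReal_mul (by positivity : (0:ℝ) ≤ d ^ (-(μ₂ / p₂))),
            ENNReal.ofReal_mul (by positivity : (0:ℝ) ≤ R ^ k),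
            ENNReal.ofReal_mul (by positivity : (0:ℝ) ≤ (d ^ n) ^ θ)]
          ac_rfl
      _ ≤ ENNReal.ofReal (c * d ^ (-(μ₁ / p₁))) * eLpNorm g (ENNReal.ofReal p₁) ν := by
          gcongr
      _ = ENNReal.ofReal c * (ENNReal.ofReal (d ^ (-(μ₁ / p₁))) *
            eLpNorm g (ENNReal.ofReal p₁) ν) := by
          rw [ENNReal.ofReal_mul hc, mul_assoc]
      _ ≤ ENNReal.ofReal c * morreyNorm p₁ μ₁ g := by
          gcongr
          exact morrey_ball_le p₁ μ₁ g x₀ hd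
  -- assemble
  show morreyNorm p₂ μ₂ fβ ≤ ENNReal.ofReal c * morreyNorm p₁ μ₁ g
  rw [morreyNorm]
  refine iSup_le fun x₀ => iSup_le fun d => iSup_le fun hd => ?_
  rcases le_or_gt d (2*R) with hcase | hcase
  · exact key x₀ d hd hcase
  · have hsub : Function.support fβ ⊆ Metric.ball (0:En n) (2*R) := by
      intro ξ hξ
      have hgξ : g ξ ≠ 0 := by
        intro h0
        apply hξ
        simp [hfβ, h0]
      have h1 : ‖ξ‖ ≤ R := hsupp ξ hgξ
      rw [mem_ball_zero_iff]
      linarith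
    have hEL : eLpNorm fβ (ENNReal.ofReal p₂) (volume.restrict (Metric.ball x₀ d)) ≤
        eLpNorm fβ (ENNReal.ofReal p₂) (volume.restrict (Metric.ball (0:En n) (2*R))) := by
      calc eLpNorm fβ (ENNReal.ofReal p₂) (volume.restrict (Metric.ball x₀ d))
          ≤ eLpNorm fβ (ENNReal.ofReal p₂) volume :=
            eLpNorm_mono_measure _ Measure.restrict_le_self
        _ = eLpNorm fβ (ENNReal.ofReal p₂) (volume.restrict (Metric.ball (0:En n) (2*R))) :=
            (eLpNorm_restrict_eq_of_support_subset hsub).symm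
    have hscal : d ^ (-(μ₂ / p₂)) ≤ (2*R) ^ (-(μ₂ / p₂)) :=
      Real.rpow_le_rpow_of_nonpos (by positivity) hcase.le
        (neg_nonpos.2 (div_nonneg hμ₂ hp₂0.le))
    calc ENNReal.ofReal (d ^ (-(μ₂ / p₂))) *
          eLpNorm fβ (ENNReal.ofReal p₂) (volume.restrict (Metric.ball x₀ d))
        ≤ ENNReal.ofReal ((2*R) ^ (-(μ₂ / p₂))) *
          eLpNorm fβ (ENNReal.ofReal p₂) (volume.restrict (Metric.ball (0:En n) (2*R))) := by
          exact mul_le_mul' (ENNReal.ofReal_le_ofReal hscal) hEL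
      _ ≤ ENNReal.ofReal c * morreyNorm p₁ μ₁ g := key 0 (2*R) (by positivity) le_rfl

end
end

section
/- (Sobolev-type embedding for Fourier–Besov–Morrey spaces.) Let n ≥ 1, 1 ≤ p₂ ≤ p₁ < ∞, 0 ≤ μ₁, μ₂ < n, s₂ ≤ s₁ ∈ ℝ satisfy s₂ + (n − μ₂)/p₂ = s₁ + (n − μ₁)/p₁, and let 1 ≤ r₁ ≤ r₂ ≤ ∞. Then there is a constant C > 0 such that for every tempered distribution f (modulo polynomials) whose Fourier transform f̂ is locally integrable, ‖f‖_{FN^{s₂}_{p₂,μ₂,r₂}} ≤ C ‖f‖_{FN^{s₁}_{p₁,μ₁,r₁}}; in particular the continuous inclusion FN^{s₁}_{p₁,μ₁,r₁}(ℝⁿ) ⊂ FN^{s₂}_{p₂,μ₂,r₂}(ℝⁿ) holds. -/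
open MeasureTheory ENNReal

noncomputable section

/-- ℓʳ norm over ℤ of a family of extended reals. -/
noncomputable def lrNorm (r : ℝ≥0∞) (a : ℤ → ℝ≥0∞) : ℝ≥0∞ :=
  if r = ⊤ then ⨆ j, a j else (∑' j, a j ^ r.toReal) ^ (1 / r.toReal)

/-- A Littlewood–Paley function: smooth, `0 ≤ φ ≤ 1`, supported in the annulus
`{3/4 ≤ |ξ| ≤ 8/3}`, with `∑_{j∈ℤ} φ(2^{-j}ξ) = 1` for `ξ ≠ 0`. -/
def IsLP {n : ℕ} (φ : En n → ℝ) : Prop :=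
  ContDiff ℝ (⊤ : ℕ∞) φ ∧ (∀ ξ, 0 ≤ φ ξ) ∧ (∀ ξ, φ ξ ≤ 1) ∧
    (∀ ξ, φ ξ ≠ 0 → 3 / 4 ≤ ‖ξ‖ ∧ ‖ξ‖ ≤ 8 / 3) ∧
    ∀ ξ : En n, ξ ≠ 0 → HasSum (fun j : ℤ => φ ((2 : ℝ) ^ (-j) • ξ)) 1

/-- Fourier–Besov–Morrey norm `‖f‖_{FN^s_{q,μ,r}}`, expressed in terms of the Fourier
transform `fhat` of `f`. -/
noncomputable def fbmNorm {n : ℕ} {F : Type*} [NormedAddCommGroup F] [NormedSpace ℝ F]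
    (s q μ : ℝ) (r : ℝ≥0∞) (φ : En n → ℝ) (fhat : En n → F) : ℝ≥0∞ :=
  lrNorm r fun j : ℤ =>
    ENNReal.ofReal ((2 : ℝ) ^ ((j : ℝ) * s)) *
      morreyNorm q μ (fun ξ => φ ((2 : ℝ) ^ (-j) • ξ) • fhat ξ)

/-! ### Auxiliary lemmas -/

open Metric

lemma rpow_inv_cancel {a : ℝ≥0∞} {p : ℝ} (hp : p ≠ 0) : (a ^ p) ^ (1/p) = a := by
  rw [← ENNReal.rpow_mul, mul_one_div, div_self hp, ENNReal.rpow_one]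

lemma sup_le_lpsum {p : ℝ} (hp : 0 < p) (a : ℤ → ℝ≥0∞) :
    (⨆ j, a j) ≤ (∑' j, a j ^ p) ^ (1/p) := by
  refine iSup_le fun j => ?_
  have h1 : a j ^ p ≤ ∑' j, a j ^ p := ENNReal.le_tsum j
  have h2 := ENNReal.rpow_le_rpow h1 (by positivity : (0:ℝ) ≤ 1/p)
  rwa [rpow_inv_cancel hp.ne'] at h2

lemma lp_mono_aux {p q : ℝ} (hp : 0 < p) (hpq : p ≤ q) (a : ℤ → ℝ≥0∞) :
    (∑' j, a j ^ q) ^ (1/q) ≤ (∑' j, a j ^ p) ^ (1/p) := by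
  have hq : 0 < q := hp.trans_le hpq
  set S := (∑' j, a j ^ p) ^ (1/p) with hS
  rcases eq_or_ne S ⊤ with hStop | hStop
  · simp [hStop]
  have hsum : ∑' j, a j ^ p = S ^ p := (rpow_inv_cancel (p := 1/p) (by positivity)).symm.trans (by
    rw [hS]; rw [one_div_one_div])
  have hja : ∀ j, a j ≤ S := fun j => by
    have h1 : a j ^ p ≤ ∑' j, a j ^ p := ENNReal.le_tsum j
    have h2 := ENNReal.rpow_le_rpow h1 (by positivity : (0:ℝ) ≤ 1/p)
    rwa [rpow_inv_cancel hp.ne'] at h2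
  rcases eq_or_ne S 0 with hS0 | hS0
  · have hz : ∀ j, a j = 0 := fun j => le_antisymm (hS0 ▸ hja j) zero_le
    simp only [hz, ENNReal.zero_rpow_of_pos hq, tsum_zero]
    rw [ENNReal.zero_rpow_of_pos (by positivity : (0:ℝ) < 1/q)]
    exact zero_le
  · have key : ∑' j, a j ^ q ≤ S ^ q := by
      calc ∑' j, a j ^ q ≤ ∑' j, a j ^ p * S ^ (q - p) := by
            refine ENNReal.tsum_le_tsum fun j => ?_
            rcases eq_or_ne (a j) 0 with h0 | h0
            · simp [h0, ENNReal.zero_rpow_of_pos hq]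
            · have hfin : a j ≠ ⊤ := ((hja j).trans_lt (lt_top_iff_ne_top.mpr hStop)).ne
              have hq' : a j ^ q = a j ^ p * a j ^ (q - p) := by
                rw [← ENNReal.rpow_add _ _ h0 hfin]; ring_nf
              rw [hq']
              exact mul_le_mul_right (ENNReal.rpow_le_rpow (hja j) (by linarith)) _
        _ = S ^ p * S ^ (q - p) := by rw [ENNReal.tsum_mul_right, hsum]
        _ = S ^ q := by rw [← ENNReal.rpow_add _ _ hS0 hStop]; ring_nf
    have h3 := ENNReal.rpow_le_rpow key (by positivity : (0:ℝ) ≤ 1/q)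
    rwa [rpow_inv_cancel hq.ne'] at h3

lemma lrNorm_anti {r₁ r₂ : ℝ≥0∞} (hr₁ : 1 ≤ r₁) (hr : r₁ ≤ r₂) (a : ℤ → ℝ≥0∞) :
    lrNorm r₂ a ≤ lrNorm r₁ a := by
  rcases eq_or_ne r₁ ⊤ with h1 | h1
  · rw [h1] at hr; rw [top_le_iff.mp hr, h1]
  have hp0 : 0 < r₁.toReal := by
    have h := ENNReal.toReal_mono h1 hr₁
    simp only [ENNReal.toReal_one] at h; linarith
  rcases eq_or_ne r₂ ⊤ with h2 | h2
  · rw [lrNorm, if_pos h2, lrNorm, if_neg h1]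
    exact sup_le_lpsum hp0 a
  · rw [lrNorm, if_neg h2, lrNorm, if_neg h1]
    exact lp_mono_aux hp0 (ENNReal.toReal_mono h2 hr) a

lemma lrNorm_mono {r : ℝ≥0∞} {a b : ℤ → ℝ≥0∞} (h : ∀ j, a j ≤ b j) :
    lrNorm r a ≤ lrNorm r b := by
  rw [lrNorm, lrNorm]
  split_ifs with h'
  · exact iSup_mono h
  · exact ENNReal.rpow_le_rpow
      (ENNReal.tsum_le_tsum fun j => ENNReal.rpow_le_rpow (h j) ENNReal.toReal_nonneg)
      (by positivity)

lemma lrNorm_const_mul {r : ℝ≥0∞} (hr : r ≠ 0) (c : ℝ≥0∞) (a : ℤ → ℝ≥0∞) :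
    lrNorm r (fun j => c * a j) ≤ c * lrNorm r a := by
  rw [lrNorm, lrNorm]
  split_ifs with h'
  · exact le_of_eq (ENNReal.mul_iSup _ _).symm
  · have hp0 : 0 < r.toReal := ENNReal.toReal_pos hr h'
    calc (∑' j, (c * a j) ^ r.toReal) ^ (1/r.toReal)
        = (c ^ r.toReal * ∑' j, a j ^ r.toReal) ^ (1/r.toReal) := by
          rw [← ENNReal.tsum_mul_left]
          exact congrArg (· ^ (1/r.toReal))
            (tsum_congr fun j => ENNReal.mul_rpow_of_nonneg _ _ hp0.le)
      _ = c * (∑' j, a j ^ r.toReal) ^ (1/r.toReal) := by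
          rw [ENNReal.mul_rpow_of_nonneg _ _ (by positivity : (0:ℝ) ≤ 1/r.toReal),
            rpow_inv_cancel hp0.ne']
      _ ≤ c * (∑' j, a j ^ r.toReal) ^ (1/r.toReal) := le_rfl

lemma ofReal_rpow_mul_ofReal_rpow {ρ : ℝ} (hρ : 0 < ρ) (a b : ℝ) :
    ENNReal.ofReal (ρ ^ a) * ENNReal.ofReal (ρ ^ b) = ENNReal.ofReal (ρ ^ (a + b)) := by
  rw [← ENNReal.ofReal_mul (Real.rpow_nonneg hρ.le a), ← Real.rpow_add hρ]

lemma eLpNorm_le_morrey {n : ℕ} {g : En n → ℂ} {p μq : ℝ} (y : En n) {ρ : ℝ} (hρ : 0 < ρ) :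
    eLpNorm g (ENNReal.ofReal p) (volume.restrict (ball y ρ)) ≤
      ENNReal.ofReal (ρ ^ (μq / p)) * morreyNorm p μq g := by
  have h1 : ENNReal.ofReal (ρ ^ (-(μq / p))) *
      eLpNorm g (ENNReal.ofReal p) (volume.restrict (ball y ρ)) ≤ morreyNorm p μq g := by
    refine le_iSup_of_le y ?_
    refine le_iSup_of_le ρ ?_
    exact le_iSup_of_le hρ le_rfl
  have h2 := mul_le_mul_right h1 (ENNReal.ofReal (ρ ^ (μq / p)))
  rwa [← mul_assoc, ofReal_rpow_mul_ofReal_rpow hρ, add_neg_cancel, Real.rpow_zero,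
    ENNReal.ofReal_one, one_mul] at h2

lemma ball_est {n : ℕ} (hn : 1 ≤ n) {p₁ p₂ μ₁ μ₂ : ℝ}
    (hp₂ : 1 ≤ p₂) (hp : p₂ ≤ p₁)
    {g : En n → ℂ} (hg : AEStronglyMeasurable g volume)
    (y : En n) {ρ : ℝ} (hρ : 0 < ρ) :
    ENNReal.ofReal (ρ ^ (-(μ₂ / p₂))) *
        eLpNorm g (ENNReal.ofReal p₂) (volume.restrict (ball y ρ)) ≤
      ENNReal.ofReal (ρ ^ ((n - μ₂)/p₂ - (n - μ₁)/p₁)) *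
        (volume (ball (0 : En n) 1)) ^ (1/p₂ - 1/p₁) * morreyNorm p₁ μ₁ g := by
  have hp₁ : 1 ≤ p₁ := hp₂.trans hp
  have hp₂0 : 0 < p₂ := lt_of_lt_of_le one_pos hp₂
  have hp₁0 : 0 < p₁ := lt_of_lt_of_le one_pos hp₁
  have hθ : 0 ≤ 1/p₂ - 1/p₁ := by
    have h := one_div_le_one_div_of_le hp₂0 hp
    linarith
  haveI : Nonempty (Fin n) := ⟨⟨0, hn⟩⟩
  haveI : Nontrivial (En n) := inferInstance
  have hq : ENNReal.ofReal p₂ ≤ ENNReal.ofReal p₁ := ENNReal.ofReal_le_ofReal hp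
  have hH := eLpNorm_le_eLpNorm_mul_rpow_measure_univ (μ := volume.restrict (ball y ρ)) hq
    hg.restrict
  rw [Measure.restrict_apply_univ] at hH
  rw [ENNReal.toReal_ofReal (by linarith : (0:ℝ) ≤ p₂),
      ENNReal.toReal_ofReal (by linarith : (0:ℝ) ≤ p₁)] at hH
  have hvol : volume (ball y ρ) = ENNReal.ofReal (ρ ^ (n:ℝ)) * volume (ball (0:En n) 1) := by
    rw [Measure.addHaar_ball volume y hρ.le, finrank_euclideanSpace_fin, ← Real.rpow_natCast ρ n]
  have hvolθ : (volume (ball y ρ)) ^ (1/p₂ - 1/p₁)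
      = ENNReal.ofReal (ρ ^ ((n:ℝ) * (1/p₂ - 1/p₁))) *
          (volume (ball (0:En n) 1)) ^ (1/p₂ - 1/p₁) := by
    rw [hvol, ENNReal.mul_rpow_of_nonneg _ _ hθ,
      ENNReal.ofReal_rpow_of_pos (Real.rpow_pos_of_pos hρ _), ← Real.rpow_mul hρ.le]
  calc ENNReal.ofReal (ρ ^ (-(μ₂ / p₂))) *
        eLpNorm g (ENNReal.ofReal p₂) (volume.restrict (ball y ρ))
      ≤ ENNReal.ofReal (ρ ^ (-(μ₂ / p₂))) *
          (eLpNorm g (ENNReal.ofReal p₁) (volume.restrict (ball y ρ)) *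
            (volume (ball y ρ)) ^ (1/p₂ - 1/p₁)) := mul_le_mul_right hH _
    _ ≤ ENNReal.ofReal (ρ ^ (-(μ₂ / p₂))) *
          ((ENNReal.ofReal (ρ ^ (μ₁/p₁)) * morreyNorm p₁ μ₁ g) *
            (ENNReal.ofReal (ρ ^ ((n:ℝ) * (1/p₂ - 1/p₁))) *
              (volume (ball (0:En n) 1)) ^ (1/p₂ - 1/p₁))) := by
        rw [← hvolθ]
        exact mul_le_mul_right (mul_le_mul_left (eLpNorm_le_morrey y hρ) _) _
    _ = ENNReal.ofReal (ρ ^ (-(μ₂ / p₂) + (μ₁/p₁ + (n:ℝ) * (1/p₂ - 1/p₁)))) *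
          (volume (ball (0:En n) 1)) ^ (1/p₂ - 1/p₁) * morreyNorm p₁ μ₁ g := by
        rw [← ofReal_rpow_mul_ofReal_rpow hρ, ← ofReal_rpow_mul_ofReal_rpow hρ]
        ring
    _ = ENNReal.ofReal (ρ ^ ((n - μ₂)/p₂ - (n - μ₁)/p₁)) *
          (volume (ball (0 : En n) 1)) ^ (1/p₂ - 1/p₁) * morreyNorm p₁ μ₁ g := by
        have hexp : -(μ₂ / p₂) + (μ₁/p₁ + (n:ℝ) * (1/p₂ - 1/p₁)) = (n - μ₂)/p₂ - (n - μ₁)/p₁ := by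
          field_simp
          ring
        rw [hexp]

lemma morrey_ball_bound {n : ℕ} (hn : 1 ≤ n) {p₁ p₂ μ₁ μ₂ : ℝ}
    (hp₂ : 1 ≤ p₂) (hp : p₂ ≤ p₁) (hμ₂ : 0 ≤ μ₂)
    (he : 0 ≤ (n - μ₂)/p₂ - (n - μ₁)/p₁)
    {g : En n → ℂ} (hg : AEStronglyMeasurable g volume)
    {R : ℝ} (hR : 0 < R) (hsupp : ∀ ξ : En n, R < ‖ξ‖ → g ξ = 0) :
    morreyNorm p₂ μ₂ g ≤
      ENNReal.ofReal ((2:ℝ) ^ (μ₂/p₂ + ((n - μ₂)/p₂ - (n - μ₁)/p₁))) *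
        ((volume (ball (0 : En n) 1)) ^ (1/p₂ - 1/p₁) *
          (ENNReal.ofReal (R ^ ((n - μ₂)/p₂ - (n - μ₁)/p₁)) * morreyNorm p₁ μ₁ g)) := by
  set e := (n - μ₂)/p₂ - (n - μ₁)/p₁ with he'
  set V := (volume (ball (0 : En n) 1)) ^ (1/p₂ - 1/p₁) with hV
  set M := morreyNorm p₁ μ₁ g with hM
  have hp₂0 : 0 < p₂ := lt_of_lt_of_le one_pos hp₂
  have hc : 0 ≤ μ₂ / p₂ := div_nonneg hμ₂ hp₂0.le
  have hA : (1:ℝ≥0∞) ≤ ENNReal.ofReal ((2:ℝ) ^ (μ₂/p₂ + e)) := by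
    rw [← ENNReal.ofReal_one]
    exact ENNReal.ofReal_le_ofReal (Real.one_le_rpow one_le_two (add_nonneg hc he))
  refine iSup_le fun x₀ => iSup_le fun d => iSup_le fun hd => ?_
  rcases le_or_gt d R with hdR | hdR
  · calc ENNReal.ofReal (d ^ (-(μ₂/p₂))) *
          eLpNorm g (ENNReal.ofReal p₂) (volume.restrict (ball x₀ d))
        ≤ ENNReal.ofReal (d ^ e) * V * M := ball_est hn hp₂ hp hg x₀ hd
      _ ≤ ENNReal.ofReal (R ^ e) * V * M := by
          gcongr
      _ = V * (ENNReal.ofReal (R ^ e) * M) := by ring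
      _ ≤ ENNReal.ofReal ((2:ℝ) ^ (μ₂/p₂ + e)) * (V * (ENNReal.ofReal (R ^ e) * M)) :=
          le_mul_of_one_le_left zero_le hA
  · have key : eLpNorm g (ENNReal.ofReal p₂) (volume.restrict (ball x₀ d)) ≤
        eLpNorm g (ENNReal.ofReal p₂) (volume.restrict (ball (0 : En n) (2*R))) := by
      rw [← eLpNorm_indicator_eq_eLpNorm_restrict measurableSet_ball,
          ← eLpNorm_indicator_eq_eLpNorm_restrict measurableSet_ball]
      refine eLpNorm_mono fun ξ => ?_
      by_cases hξ : ξ ∈ ball (0 : En n) (2*R)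
      · rw [Set.indicator_of_mem hξ]
        exact norm_indicator_le_norm_self _ _
      · have hgz : g ξ = 0 := by
          refine hsupp ξ ?_
          rw [mem_ball_zero_iff, not_lt] at hξ
          linarith
        rw [Set.indicator_of_notMem hξ, norm_zero]
        by_cases h2 : ξ ∈ ball x₀ d
        · rw [Set.indicator_of_mem h2, hgz, norm_zero]
        · rw [Set.indicator_of_notMem h2, norm_zero]
    have h2R : 0 < 2*R := by linarith
    calc ENNReal.ofReal (d ^ (-(μ₂/p₂))) *
          eLpNorm g (ENNReal.ofReal p₂) (volume.restrict (ball x₀ d))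
        ≤ ENNReal.ofReal (R ^ (-(μ₂/p₂))) *
            eLpNorm g (ENNReal.ofReal p₂) (volume.restrict (ball (0:En n) (2*R))) := by
          exact mul_le_mul' (ENNReal.ofReal_le_ofReal
            (Real.rpow_le_rpow_of_nonpos hR hdR.le (neg_nonpos.mpr hc))) key
      _ = ENNReal.ofReal ((2:ℝ) ^ (μ₂/p₂)) * (ENNReal.ofReal ((2*R) ^ (-(μ₂/p₂))) *
            eLpNorm g (ENNReal.ofReal p₂) (volume.restrict (ball (0:En n) (2*R)))) := by
          have h1 : (2:ℝ)^(μ₂/p₂) * (2*R)^(-(μ₂/p₂)) = R ^ (-(μ₂/p₂)) := by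
            rw [Real.mul_rpow (by norm_num) hR.le, ← mul_assoc,
              ← Real.rpow_add (by norm_num : (0:ℝ) < 2), add_neg_cancel,
              Real.rpow_zero, one_mul]
          rw [← mul_assoc, ← ENNReal.ofReal_mul (by positivity), h1]
      _ ≤ ENNReal.ofReal ((2:ℝ) ^ (μ₂/p₂)) * (ENNReal.ofReal ((2*R) ^ e) * V * M) := by
          exact mul_le_mul_right (ball_est hn hp₂ hp hg 0 h2R) _
      _ = ENNReal.ofReal ((2:ℝ) ^ (μ₂/p₂ + e)) * (V * (ENNReal.ofReal (R ^ e) * M)) := by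
          have h1 : ((2:ℝ)*R)^e = (2:ℝ)^e * R^e := Real.mul_rpow (by norm_num) hR.le
          rw [h1, ENNReal.ofReal_mul (by positivity),
            ← ofReal_rpow_mul_ofReal_rpow (by norm_num : (0:ℝ) < 2) (μ₂/p₂) e]
          ring

lemma ofReal_shuffle (a b k r : ℝ) (M : ℝ≥0∞) (ha : 0 ≤ a) (hb : 0 ≤ b) (hk : 0 ≤ k) :
    ENNReal.ofReal a * (ENNReal.ofReal b * (ENNReal.ofReal k * (ENNReal.ofReal r * M)))
      = ENNReal.ofReal (a*(b*(k*r))) * M := by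
  rw [ENNReal.ofReal_mul ha, ENNReal.ofReal_mul hb, ENNReal.ofReal_mul hk]
  ring

/-- Sobolev-type embedding for Fourier–Besov–Morrey spaces:
if `p₂ ≤ p₁`, `s₂ ≤ s₁`, `s₂ + (n−μ₂)/p₂ = s₁ + (n−μ₁)/p₁` and `r₁ ≤ r₂`, then
`‖f‖_{FN^{s₂}_{p₂,μ₂,r₂}} ≤ C ‖f‖_{FN^{s₁}_{p₁,μ₁,r₁}}` for all tempered distributions `f`
(modulo polynomials) with locally integrable Fourier transform `fhat`. -/
theorem fbm_sobolev_embedding {n : ℕ} (hn : 1 ≤ n) (p₁ p₂ μ₁ μ₂ s₁ s₂ : ℝ) (r₁ r₂ : ℝ≥0∞)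
    (hp₂ : 1 ≤ p₂) (hp : p₂ ≤ p₁)
    (hμ₁ : 0 ≤ μ₁) (hμ₁' : μ₁ < n) (hμ₂ : 0 ≤ μ₂) (hμ₂' : μ₂ < n)
    (hs : s₂ ≤ s₁) (hscale : s₂ + (n - μ₂) / p₂ = s₁ + (n - μ₁) / p₁)
    (hr₁ : 1 ≤ r₁) (hr : r₁ ≤ r₂)
    (φ : En n → ℝ) (hφ : IsLP φ) :
    ∃ C > (0 : ℝ), ∀ fhat : En n → ℂ,
      LocallyIntegrable fhat volume →
      fbmNorm s₂ p₂ μ₂ r₂ φ fhat ≤ ENNReal.ofReal C * fbmNorm s₁ p₁ μ₁ r₁ φ fhat := by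
  have hp₁ : 1 ≤ p₁ := hp₂.trans hp
  have hp₂0 : 0 < p₂ := lt_of_lt_of_le one_pos hp₂
  have hp₁0 : 0 < p₁ := lt_of_lt_of_le one_pos hp₁
  have hee : ((n:ℝ) - μ₂)/p₂ - ((n:ℝ) - μ₁)/p₁ = s₁ - s₂ := by linarith
  have he : 0 ≤ s₁ - s₂ := by linarith
  have hθ : 0 ≤ 1/p₂ - 1/p₁ := by
    have h := one_div_le_one_div_of_le hp₂0 hp
    linarith
  haveI : Nonempty (Fin n) := ⟨⟨0, hn⟩⟩
  set V := (volume (ball (0 : En n) 1)) ^ (1/p₂ - 1/p₁) with hV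
  have hVtop : V ≠ ⊤ :=
    ENNReal.rpow_ne_top_of_nonneg hθ measure_ball_lt_top.ne
  have hVpos : 0 < V := by
    refine ENNReal.rpow_pos ?_ measure_ball_lt_top.ne
    exact measure_ball_pos volume 0 one_pos
  set K := V.toReal with hK
  have hKpos : 0 < K := ENNReal.toReal_pos hVpos.ne' hVtop
  have hVK : V = ENNReal.ofReal K := (ENNReal.ofReal_toReal hVtop).symm
  set c := μ₂/p₂ + (s₁ - s₂) with hcdef
  have hc0 : 0 ≤ c := add_nonneg (div_nonneg hμ₂ hp₂0.le) he
  set C := (2:ℝ)^c * (K * (8/3:ℝ)^(s₁ - s₂)) with hCdef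
  have hCpos : 0 < C := by positivity
  refine ⟨C, hCpos, fun fhat hloc => ?_⟩
  have hj : ∀ j : ℤ,
      ENNReal.ofReal ((2:ℝ) ^ ((j:ℝ) * s₂)) *
          morreyNorm p₂ μ₂ (fun ξ => φ ((2:ℝ)^(-j) • ξ) • fhat ξ)
        ≤ ENNReal.ofReal C * (ENNReal.ofReal ((2:ℝ) ^ ((j:ℝ) * s₁)) *
          morreyNorm p₁ μ₁ (fun ξ => φ ((2:ℝ)^(-j) • ξ) • fhat ξ)) := by
    intro j
    set g : En n → ℂ := fun ξ => φ ((2:ℝ)^(-j) • ξ) • fhat ξ with hgdef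
    have hg : AEStronglyMeasurable g volume :=
      ((hφ.1.continuous.comp (continuous_const_smul ((2:ℝ)^(-j)))).aestronglyMeasurable).smul
        hloc.aestronglyMeasurable
    have h2j : (0:ℝ) < (2:ℝ)^(j:ℤ) := zpow_pos (by norm_num) _
    have hRpos : 0 < (8/3:ℝ) * (2:ℝ)^(j:ℤ) := by positivity
    have hsupp : ∀ ξ : En n, (8/3:ℝ) * (2:ℝ)^(j:ℤ) < ‖ξ‖ → g ξ = 0 := by
      intro ξ hξ
      have hφ0 : φ ((2:ℝ)^(-j) • ξ) = 0 := by
        by_contra h0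
        have hb := (hφ.2.2.2.1 _ h0).2
        rw [norm_smul, Real.norm_eq_abs, abs_of_pos (a := (2:ℝ)^(-j)) (by positivity)] at hb
        rw [zpow_neg] at hb
        rw [inv_mul_le_iff₀ h2j] at hb
        linarith
      simp only [hgdef, hφ0, zero_smul]
    have hbound := morrey_ball_bound hn hp₂ hp hμ₂ (hee ▸ he) hg hRpos hsupp
    rw [hee] at hbound
    calc ENNReal.ofReal ((2:ℝ) ^ ((j:ℝ) * s₂)) * morreyNorm p₂ μ₂ g
        ≤ ENNReal.ofReal ((2:ℝ) ^ ((j:ℝ) * s₂)) *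
            (ENNReal.ofReal ((2:ℝ) ^ c) * (V *
              (ENNReal.ofReal (((8/3:ℝ) * (2:ℝ)^(j:ℤ)) ^ (s₁ - s₂)) *
                morreyNorm p₁ μ₁ g))) := mul_le_mul_right hbound _
      _ = ENNReal.ofReal ((2:ℝ) ^ ((j:ℝ) * s₂) * ((2:ℝ) ^ c *
            (K * ((8/3:ℝ) * (2:ℝ)^(j:ℤ)) ^ (s₁ - s₂)))) * morreyNorm p₁ μ₁ g := by
          rw [hVK, ofReal_shuffle _ _ _ _ _ (by positivity) (by positivity) hKpos.le]
      _ = ENNReal.ofReal (C * (2:ℝ) ^ ((j:ℝ) * s₁)) * morreyNorm p₁ μ₁ g := by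
          congr 1
          have h1 : ((8/3:ℝ) * (2:ℝ)^(j:ℤ)) ^ (s₁ - s₂)
              = (8/3:ℝ)^(s₁ - s₂) * (2:ℝ)^((j:ℝ) * (s₁ - s₂)) := by
            rw [Real.mul_rpow (by norm_num) h2j.le, ← Real.rpow_intCast 2 j,
              ← Real.rpow_mul (by norm_num : (0:ℝ) ≤ 2)]
          have h2 : (j:ℝ) * s₁ = (j:ℝ) * s₂ + (j:ℝ) * (s₁ - s₂) := by ring
          rw [h1, hCdef, h2,
            Real.rpow_add (by norm_num : (0:ℝ) < 2) ((j:ℝ)*s₂) ((j:ℝ)*(s₁-s₂))]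
          ring
      _ = ENNReal.ofReal C * (ENNReal.ofReal ((2:ℝ) ^ ((j:ℝ) * s₁)) * morreyNorm p₁ μ₁ g) := by
          rw [ENNReal.ofReal_mul hCpos.le, mul_assoc]
  have hr₂0 : r₂ ≠ 0 := (zero_lt_one.trans_le (hr₁.trans hr)).ne'
  calc fbmNorm s₂ p₂ μ₂ r₂ φ fhat
      ≤ lrNorm r₂ (fun j : ℤ => ENNReal.ofReal C * (ENNReal.ofReal ((2:ℝ) ^ ((j:ℝ) * s₁)) *
          morreyNorm p₁ μ₁ (fun ξ => φ ((2:ℝ)^(-j) • ξ) • fhat ξ))) := lrNorm_mono hj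
    _ ≤ ENNReal.ofReal C * lrNorm r₂ (fun j : ℤ => ENNReal.ofReal ((2:ℝ) ^ ((j:ℝ) * s₁)) *
          morreyNorm p₁ μ₁ (fun ξ => φ ((2:ℝ)^(-j) • ξ) • fhat ξ)) :=
        lrNorm_const_mul hr₂0 _ _
    _ ≤ ENNReal.ofReal C * fbmNorm s₁ p₁ μ₁ r₁ φ fhat :=
        mul_le_mul_right (lrNorm_anti hr₁ hr _) _


end
end

section
/- Let n ≥ 1, 1 ≤ q < ∞, 0 ≤ μ < n, s ∈ ℝ, and set k := n − s − (n − μ)/q. Let g : ℝⁿ∖{0} → ℂ be a measurable function homogeneous of degree k − n, i.e. g(λξ) = λ^{k−n} g(ξ) for all λ > 0 and all ξ ≠ 0, such that ‖φ·g‖_{q,μ} < ∞. Then for every j ∈ ℤ one has 2^{js} ‖φ_j g‖_{q,μ} = ‖φ g‖_{q,μ}; consequently sup_{j∈ℤ} 2^{js} ‖φ_j g‖_{q,μ} = ‖φ g‖_{q,μ} < ∞, that is, any tempered distribution f with f̂ = g belongs to FN^s_{q,μ,∞}(ℝⁿ). In particular, FN^s_{q,μ,∞}(ℝⁿ) contains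 functions homogeneous of degree −k with −k = s − n + (n − μ)/q. -/
open MeasureTheory ENNReal

noncomputable section

/-- Reindexing the Morrey supremum by a dilation. -/

lemma iSup_ball_reindex {n : ℕ} (c : ℝ) (hc : 0 < c) (F : En n → ℝ → ℝ≥0∞) :
    (⨆ (x₀ : En n) (d : ℝ) (_ : 0 < d), F (c • x₀) (c * d)) =
      ⨆ (x₀ : En n) (d : ℝ) (_ : 0 < d), F x₀ d := by
  apply le_antisymm
  · refine iSup_le fun x₀ => iSup_le fun d => iSup_le fun hd => ?_
    exact le_iSup_of_le (c • x₀) (le_iSup_of_le (c * d) (le_iSup_of_le (mul_pos hc hd) le_rfl))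
  · refine iSup_le fun x₀ => iSup_le fun d => iSup_le fun hd => ?_
    have h1 : c • (c⁻¹ • x₀) = x₀ := smul_inv_smul₀ hc.ne' x₀
    have h2 : c * (c⁻¹ * d) = d := by field_simp
    refine le_iSup_of_le (c⁻¹ • x₀) (le_iSup_of_le (c⁻¹ * d)
      (le_iSup_of_le (by positivity) ?_))
    rw [h1, h2]

/-- a.e. congruence for the Morrey norm. -/
lemma morreyNorm_congr_ae {n : ℕ} {q μ : ℝ} {f g : En n → ℂ}
    (h : f =ᵐ[(volume : Measure (En n))] g) :
    morreyNorm q μ f = morreyNorm q μ g := by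
  unfold morreyNorm
  refine iSup_congr fun x₀ => iSup_congr fun d => iSup_congr fun hd => ?_
  rw [eLpNorm_congr_ae (h.filter_mono (ae_mono Measure.restrict_le_self))]

/-- constants pull out of the Morrey norm. -/
lemma morreyNorm_const_smul {n : ℕ} (q μ : ℝ) (a : ℝ) (f : En n → ℂ) :
    morreyNorm q μ (fun ξ => a • f ξ) = (‖a‖₊ : ℝ≥0∞) * morreyNorm q μ f := by
  unfold morreyNorm
  simp_rw [ENNReal.mul_iSup]
  refine iSup_congr fun x₀ => iSup_congr fun d => iSup_congr fun hd => ?_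
  rw [show (fun ξ => a • f ξ) = a • f from rfl, eLpNorm_const_smul, enorm_eq_nnnorm]
  ring

/-- Scaling of the Morrey norm under dilations. -/
lemma morreyNorm_comp_smul {n : ℕ} (q μ : ℝ) (hq : 1 ≤ q) (c : ℝ) (hc : 0 < c)
    (h : En n → ℂ) (hm : AEStronglyMeasurable h (volume : Measure (En n))) :
    morreyNorm q μ (fun ξ => h (c • ξ)) =
      ENNReal.ofReal (c ^ ((μ - n) / q)) * morreyNorm q μ h := by
  have hq0 : (0 : ℝ) < q := lt_of_lt_of_le one_pos hq
  set p := ENNReal.ofReal q with hp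
  have hp_top : p ≠ ⊤ := ENNReal.ofReal_ne_top
  have hmeas : Measurable (fun ξ : En n => c • ξ) := measurable_const_smul c
  set F : En n → ℝ → ℝ≥0∞ := fun y e =>
    ENNReal.ofReal (e ^ (-(μ / q))) * eLpNorm h p (volume.restrict (Metric.ball y e)) with hF
  have key : ∀ (x₀ : En n) (d : ℝ), 0 < d →
      ENNReal.ofReal (d ^ (-(μ / q))) *
        eLpNorm (fun ξ => h (c • ξ)) p (volume.restrict (Metric.ball x₀ d)) =
      ENNReal.ofReal (c ^ ((μ - n) / q)) * F (c • x₀) (c * d) := by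
    intro x₀ d hd
    have hpre : (fun ξ : En n => c • ξ) ⁻¹' Metric.ball (c • x₀) (c * d)
        = Metric.ball x₀ d := by
      ext ξ
      simp only [Set.mem_preimage, Metric.mem_ball, dist_smul₀, Real.norm_eq_abs,
        abs_of_pos hc]
      exact mul_lt_mul_iff_right₀ hc
    have hmapvol : Measure.map (fun ξ : En n => c • ξ) (volume : Measure (En n))
        = ENNReal.ofReal ((c ^ n)⁻¹) • volume := by
      rw [show (fun ξ : En n => c • ξ) = (c • ·) from rfl, Measure.map_addHaar_smul volume hc.ne']
      congr 2
      rw [finrank_euclideanSpace_fin, abs_of_pos (by positivity)]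
    have hmapr : Measure.map (fun ξ : En n => c • ξ) (volume.restrict (Metric.ball x₀ d))
        = ENNReal.ofReal ((c ^ n)⁻¹) •
            volume.restrict (Metric.ball (c • x₀) (c * d)) := by
      rw [← hpre, ← Measure.restrict_map hmeas Metric.isOpen_ball.measurableSet, hmapvol,
        Measure.restrict_smul]
    have hsm : AEStronglyMeasurable h
        (Measure.map (fun ξ : En n => c • ξ) (volume.restrict (Metric.ball x₀ d))) := by
      rw [hmapr]; exact hm.restrict.smul_measure _
    have e1 : eLpNorm (fun ξ => h (c • ξ)) p (volume.restrict (Metric.ball x₀ d))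
        = eLpNorm h p
            (Measure.map (fun ξ : En n => c • ξ) (volume.restrict (Metric.ball x₀ d))) :=
      (eLpNorm_map_measure hsm hmeas.aemeasurable).symm
    rw [e1, hmapr, eLpNorm_smul_measure_of_ne_top hp_top]
    have hptoReal : (1 / p).toReal = q⁻¹ := by
      rw [one_div, ENNReal.toReal_inv, hp, ENNReal.toReal_ofReal hq0.le]
    rw [hptoReal, smul_eq_mul, hF]
    have hofr : (ENNReal.ofReal ((c ^ n)⁻¹)) ^ (q⁻¹ : ℝ)
        = ENNReal.ofReal (((c ^ n)⁻¹) ^ (q⁻¹ : ℝ)) :=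
      ENNReal.ofReal_rpow_of_pos (by positivity)
    rw [hofr, ← mul_assoc, ← mul_assoc, ← ENNReal.ofReal_mul (by positivity),
      ← ENNReal.ofReal_mul (by positivity)]
    congr 2
    have h1 : ((c ^ n : ℝ))⁻¹ ^ (q⁻¹ : ℝ) = c ^ (-(n : ℝ) * q⁻¹) := by
      rw [← Real.rpow_natCast c n, ← Real.rpow_neg hc.le, ← Real.rpow_mul hc.le]
    have h2 : (c * d) ^ (-(μ / q)) = c ^ (-(μ / q)) * d ^ (-(μ / q)) :=
      Real.mul_rpow hc.le hd.le
    rw [h1, h2]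
    have h3 : c ^ ((μ - n) / q) * (c ^ (-(μ / q)) * d ^ (-(μ / q)))
        = (c ^ ((μ - n) / q) * c ^ (-(μ / q))) * d ^ (-(μ / q)) := by ring
    rw [h3, ← Real.rpow_add hc]
    have he : (μ - (n : ℝ)) / q + -(μ / q) = -(n : ℝ) * q⁻¹ := by ring
    rw [he, mul_comm]
  calc morreyNorm q μ (fun ξ => h (c • ξ))
      = ⨆ (x₀ : En n) (d : ℝ) (_ : 0 < d),
          ENNReal.ofReal (c ^ ((μ - n) / q)) * F (c • x₀) (c * d) := by
        unfold morreyNorm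
        exact iSup_congr fun x₀ => iSup_congr fun d => iSup_congr fun hd => key x₀ d hd
    _ = ENNReal.ofReal (c ^ ((μ - n) / q)) *
          ⨆ (x₀ : En n) (d : ℝ) (_ : 0 < d), F (c • x₀) (c * d) := by
        simp_rw [ENNReal.mul_iSup]
    _ = ENNReal.ofReal (c ^ ((μ - n) / q)) * morreyNorm q μ h := by
        rw [iSup_ball_reindex c hc F]; rfl

/-- `FN^s_{q,μ,∞}` contains homogeneous functions of degree `−k = s − n + (n−μ)/q`:
if `g` (the Fourier transform of such a function) is homogeneous of degree `k − n` with
`k = n − s − (n−μ)/q` and `‖φ g‖_{q,μ} < ∞`, then `2^{js}‖φ_j g‖_{q,μ} = ‖φ g‖_{q,μ}`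
for all `j`, and `‖f‖_{FN^s_{q,μ,∞}} = ‖φ g‖_{q,μ} < ∞`. -/
theorem fbm_contains_homogeneous {n : ℕ} (hn : 1 ≤ n) (q μ s : ℝ)
    (hq : 1 ≤ q) (hμ : 0 ≤ μ) (hμ' : μ < n)
    (k : ℝ) (hk : k = n - s - (n - μ) / q)
    (φ : En n → ℝ) (hφ : IsLP φ)
    (g : En n → ℂ) (hgm : AEStronglyMeasurable g volume)
    (hhom : ∀ l : ℝ, 0 < l → ∀ ξ : En n, ξ ≠ 0 →
      g (l • ξ) = (l ^ (k - n) : ℝ) • g ξ)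
    (hfin : morreyNorm q μ (fun ξ => φ ξ • g ξ) < ⊤) :
    (∀ j : ℤ,
      ENNReal.ofReal ((2 : ℝ) ^ ((j : ℝ) * s)) *
          morreyNorm q μ (fun ξ => φ ((2 : ℝ) ^ (-j) • ξ) • g ξ) =
        morreyNorm q μ (fun ξ => φ ξ • g ξ)) ∧
    fbmNorm s q μ ⊤ φ g = morreyNorm q μ (fun ξ => φ ξ • g ξ) ∧
    fbmNorm s q μ ⊤ φ g < ⊤ := by
  haveI : Nontrivial (En n) := by
    refine ⟨EuclideanSpace.single ⟨0, hn⟩ (1 : ℝ), 0, ?_⟩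
    intro hcontra
    have := congrArg (fun v : En n => v ⟨0, hn⟩) hcontra
    simp at this
  haveI : Filter.NeBot (nhdsWithin (0 : En n) {(0 : En n)}ᶜ) := Module.punctured_nhds_neBot ℝ (En n) 0
  have hzero : (volume : Measure (En n)) {(0 : En n)} = 0 := measure_singleton 0
  set h : En n → ℂ := fun ξ => φ ξ • g ξ with hh
  have hhm : AEStronglyMeasurable h (volume : Measure (En n)) :=
    (hφ.1.continuous.aestronglyMeasurable).smul hgm
  have hterm : ∀ j : ℤ,
      ENNReal.ofReal ((2 : ℝ) ^ ((j : ℝ) * s)) *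
          morreyNorm q μ (fun ξ => φ ((2 : ℝ) ^ (-j) • ξ) • g ξ) =
        morreyNorm q μ h := by
    intro j
    set c : ℝ := (2 : ℝ) ^ (-j) with hcdef
    have hc : 0 < c := zpow_pos (by norm_num) _
    -- a.e. identification of the j-th piece with a dilation of h
    have hae : (fun ξ : En n => φ (c • ξ) • g ξ)
        =ᵐ[(volume : Measure (En n))] fun ξ => (c ^ ((n : ℝ) - k)) • h (c • ξ) := by
      have hmem : {ξ : En n | ξ ≠ 0} ∈ ae (volume : Measure (En n)) := by
        rw [mem_ae_iff]
        simpa [Set.compl_setOf] using hzero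
      filter_upwards [hmem] with ξ hξ
      have hhomc := hhom c hc ξ hξ
      simp only [hh]
      rw [hhomc, smul_smul, smul_smul]
      congr 1
      have hone : c ^ ((n : ℝ) - k) * c ^ (k - (n : ℝ)) = 1 := by
        rw [← Real.rpow_add hc]; norm_num
      calc φ (c • ξ)
          = (c ^ ((n : ℝ) - k) * c ^ (k - (n : ℝ))) * φ (c • ξ) := by rw [hone, one_mul]
        _ = c ^ ((n : ℝ) - k) * φ (c • ξ) * c ^ (k - (n : ℝ)) := by ring
    rw [morreyNorm_congr_ae hae, morreyNorm_const_smul,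
      morreyNorm_comp_smul q μ hq c hc h hhm]
    -- collect the scalars
    have hnnorm : (‖c ^ ((n : ℝ) - k)‖₊ : ℝ≥0∞)
        = ENNReal.ofReal (c ^ ((n : ℝ) - k)) := by
      rw [← enorm_eq_nnnorm, ← ofReal_norm_eq_enorm, Real.norm_eq_abs,
        abs_of_pos (Real.rpow_pos_of_pos hc _)]
    rw [hnnorm, ← mul_assoc, ← mul_assoc, ← ENNReal.ofReal_mul (by positivity),
      ← ENNReal.ofReal_mul (by positivity)]
    have hc2 : ∀ e : ℝ, c ^ e = (2 : ℝ) ^ ((-(j : ℝ)) * e) := by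
      intro e
      rw [hcdef, ← Real.rpow_intCast (2 : ℝ) (-j), ← Real.rpow_mul (by norm_num)]
      push_cast
      ring_nf
    have hprod : (2 : ℝ) ^ ((j : ℝ) * s) * c ^ ((n : ℝ) - k) * c ^ ((μ - n) / q)
        = 1 := by
      rw [hc2, hc2, ← Real.rpow_add (by norm_num : (0:ℝ) < 2),
        ← Real.rpow_add (by norm_num : (0:ℝ) < 2)]
      have : (j : ℝ) * s + -(j : ℝ) * ((n : ℝ) - k) + -(j : ℝ) * ((μ - n) / q) = 0 := by
        subst hk; field_simp; ring
      rw [this, Real.rpow_zero]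
    rw [hprod, ENNReal.ofReal_one, one_mul]
  refine ⟨hterm, ?_, ?_⟩
  · unfold fbmNorm lrNorm
    rw [if_pos rfl]
    calc (⨆ j : ℤ, ENNReal.ofReal ((2 : ℝ) ^ ((j : ℝ) * s)) *
            morreyNorm q μ (fun ξ => φ ((2 : ℝ) ^ (-j) • ξ) • g ξ))
        = ⨆ _ : ℤ, morreyNorm q μ h := iSup_congr hterm
      _ = morreyNorm q μ h := iSup_const
  · have : fbmNorm s q μ ⊤ φ g = morreyNorm q μ h := by
      unfold fbmNorm lrNorm
      rw [if_pos rfl]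
      calc (⨆ j : ℤ, ENNReal.ofReal ((2 : ℝ) ^ ((j : ℝ) * s)) *
              morreyNorm q μ (fun ξ => φ ((2 : ℝ) ^ (-j) • ξ) • g ξ))
          = ⨆ _ : ℤ, morreyNorm q μ h := iSup_congr hterm
        _ = morreyNorm q μ h := iSup_const
    rw [this]
    exact hfin

end
end

section
/- (Smoothing estimate for the fractional Boussinesq–Coriolis–Stratification semigroup.) Let 0 ≤ μ < 3, 1 ≤ q₂ ≤ q₁ < ∞, 1 ≤ r ≤ ∞, s ∈ ℝ, 1/2 ≤ α < 5/2, ν > 0, Ω ≠ 0 and N > 0. Then there is a constant C > 0, independent of Ω and N, such that for every t > 0 and every ℂ⁴-valued v₀ ∈ FN^s_{q₁,μ,r}(ℝ³), ‖S^α_{Ω,N}(t)v₀‖_{FN^s_{q₂,μ,r}} ≤ C L ν^{−(1/(2α))((3−μ)/q₂ − (3−μ)/q₁)} t^{−(1/(2α))((3−μ)/q₂ − (3−μ)/q₁)} ‖v₀‖_{FN^s_{q₁,μ,r}}, where L = max{2, |Ω|/N, N/|Ω|}. -/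
open MeasureTheory ENNReal

noncomputable section

/-- Chemin–Lerner norm `𝓛¹((0,∞); FN^s_{q,μ,r})`, in terms of the Fourier transform. -/
noncomputable def clNorm1 {n : ℕ} {F : Type*} [NormedAddCommGroup F] [NormedSpace ℝ F]
    (s q μ : ℝ) (r : ℝ≥0∞) (φ : En n → ℝ) (fhat : ℝ → En n → F) : ℝ≥0∞ :=
  lrNorm r fun j : ℤ =>
    ENNReal.ofReal ((2 : ℝ) ^ ((j : ℝ) * s)) *
      ∫⁻ t in Set.Ioi (0 : ℝ), morreyNorm q μ (fun ξ => φ ((2 : ℝ) ^ (-j) • ξ) • fhat t ξ)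

/-- Chemin–Lerner norm `𝓛^∞((0,∞); FN^s_{q,μ,r})`, in terms of the Fourier transform. -/
noncomputable def clNormInf {n : ℕ} {F : Type*} [NormedAddCommGroup F] [NormedSpace ℝ F]
    (s q μ : ℝ) (r : ℝ≥0∞) (φ : En n → ℝ) (fhat : ℝ → En n → F) : ℝ≥0∞ :=
  lrNorm r fun j : ℤ =>
    ENNReal.ofReal ((2 : ℝ) ^ ((j : ℝ) * s)) *
      essSup (fun t => morreyNorm q μ (fun ξ => φ ((2 : ℝ) ^ (-j) • ξ) • fhat t ξ))
        (volume.restrict (Set.Ioi (0 : ℝ)))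

/-- Norm of `X_r = 𝓛^∞(I;FN^s_{q,μ,r}) ∩ 𝓛^1(I;FN^{s+2α}_{q,μ,r})`. -/
noncomputable def xrNorm {n : ℕ} {F : Type*} [NormedAddCommGroup F] [NormedSpace ℝ F]
    (s α q μ : ℝ) (r : ℝ≥0∞) (φ : En n → ℝ) (fhat : ℝ → En n → F) : ℝ≥0∞ :=
  clNormInf s q μ r φ fhat + clNorm1 (s + 2 * α) q μ r φ fhat

/-- `|ξ|' = √(N²ξ₁² + N²ξ₂² + Ω²ξ₃²)`. -/
noncomputable def nxp (Ω N : ℝ) (ξ : En 3) : ℝ :=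
  Real.sqrt (N ^ 2 * (ξ 0) ^ 2 + N ^ 2 * (ξ 1) ^ 2 + Ω ^ 2 * (ξ 2) ^ 2)

noncomputable def M1 (Ω N : ℝ) (ξ : En 3) : Matrix (Fin 4) (Fin 4) ℝ :=
  ((nxp Ω N ξ) ^ 2)⁻¹ •
    !![Ω ^ 2 * (ξ 2) ^ 2, 0, -(N ^ 2 * ξ 0 * ξ 2), Ω * N * ξ 1 * ξ 2;
       0, Ω ^ 2 * (ξ 2) ^ 2, -(N ^ 2 * ξ 1 * ξ 2), -(Ω * N * ξ 0 * ξ 2);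
       -(Ω ^ 2 * ξ 0 * ξ 2), -(Ω ^ 2 * ξ 1 * ξ 2), N ^ 2 * ((ξ 0) ^ 2 + (ξ 1) ^ 2), 0;
       Ω * N * ξ 1 * ξ 2, -(Ω * N * ξ 0 * ξ 2), 0, N ^ 2 * ((ξ 0) ^ 2 + (ξ 1) ^ 2)]

noncomputable def M2 (Ω N : ℝ) (ξ : En 3) : Matrix (Fin 4) (Fin 4) ℝ :=
  (‖ξ‖ * nxp Ω N ξ)⁻¹ •
    !![0, -(Ω * (ξ 2) ^ 2), Ω * ξ 1 * ξ 2, N * ξ 0 * ξ 2;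
       Ω * (ξ 2) ^ 2, 0, -(Ω * ξ 0 * ξ 2), N * ξ 1 * ξ 2;
       -(Ω * ξ 1 * ξ 2), Ω * ξ 0 * ξ 2, 0, -(N * ((ξ 0) ^ 2 + (ξ 1) ^ 2));
       -(N * ξ 0 * ξ 2), -(N * ξ 1 * ξ 2), N * ((ξ 0) ^ 2 + (ξ 1) ^ 2), 0]

noncomputable def M3 (Ω N : ℝ) (ξ : En 3) : Matrix (Fin 4) (Fin 4) ℝ :=
  ((nxp Ω N ξ) ^ 2)⁻¹ •
    !![N ^ 2 * (ξ 1) ^ 2, -(N ^ 2 * ξ 0 * ξ 1), 0, -(Ω * N * ξ 1 * ξ 2);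
       -(N ^ 2 * ξ 0 * ξ 1), N ^ 2 * (ξ 0) ^ 2, 0, Ω * N * ξ 0 * ξ 2;
       0, 0, 0, 0;
       -(Ω * N * ξ 1 * ξ 2), Ω * N * ξ 0 * ξ 2, 0, Ω ^ 2 * (ξ 2) ^ 2]

/-- Fourier symbol of the fractional Boussinesq–Coriolis–Stratification semigroup
`S^α_{Ω,N}(t)`. -/
noncomputable def symS (ν α Ω N t : ℝ) (ξ : En 3) : Matrix (Fin 4) (Fin 4) ℝ :=
  Real.exp (-(ν * t * ‖ξ‖ ^ (2 * α))) •
    (Real.cos (t * nxp Ω N ξ / ‖ξ‖) • M1 Ω N ξ +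
      Real.sin (t * nxp Ω N ξ / ‖ξ‖) • M2 Ω N ξ + M3 Ω N ξ)

/-- Action of `S^α_{Ω,N}(t)` on the Fourier side: `(S(t)v₀)^ = [S(t)]^ v̂₀`. -/
noncomputable def applyS (ν α Ω N t : ℝ) (v0 : En 3 → Fin 4 → ℂ) : En 3 → Fin 4 → ℂ :=
  fun ξ => ((symS ν α Ω N t ξ).map (fun x : ℝ => (x : ℂ))).mulVec (v0 ξ)

lemma abs_inv_mul_le {c E L : ℝ} (hc : 0 ≤ c) (hL : 0 ≤ L) (h : |E| ≤ L * c) :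
    |c⁻¹ * E| ≤ L := by
  rcases eq_or_lt_of_le hc with h0 | hpos
  · have hE : E = 0 := by
      have : |E| ≤ 0 := by rw [← h0] at h; simpa using h
      simpa [abs_nonpos_iff] using this
    simp [hE, hL]
  · rw [abs_mul, abs_inv, abs_of_pos hpos, inv_mul_le_iff₀ hpos]
    linarith [h]
lemma habs_neg {E B : ℝ} (h : |E| ≤ B) : |-E| ≤ B := by rwa [abs_neg]
lemma cross_same {c u v w L : ℝ} (hw : 0 ≤ w) (hL : 1 ≤ L) :
    |c ^ 2 * u * v| ≤ L * (c ^ 2 * u ^ 2 + c ^ 2 * v ^ 2 + w) := by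
  have h1 : |c ^ 2 * u * v| = c ^ 2 * (|u| * |v|) := by
    rw [abs_mul, abs_mul, abs_pow, sq_abs]; ring
  rw [h1]
  nlinarith [sq_nonneg (|u| - |v|), sq_abs u, sq_abs v, abs_nonneg u, abs_nonneg v,
    mul_nonneg (mul_nonneg (sq_nonneg c) (abs_nonneg u)) (abs_nonneg v),
    mul_nonneg (sub_nonneg.2 hL) (add_nonneg (add_nonneg (mul_nonneg (sq_nonneg c) (sq_nonneg u)) (mul_nonneg (sq_nonneg c) (sq_nonneg v))) hw),
    mul_nonneg (sub_nonneg.2 hL) hw,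
    mul_nonneg (sub_nonneg.2 hL) (mul_nonneg (sq_nonneg c) (sq_nonneg (u - v))),
    mul_nonneg (sub_nonneg.2 hL) (mul_nonneg (sq_nonneg c) (sq_nonneg (u + v)))]
lemma cross_mixed {A B u v w L : ℝ} (hw : 0 ≤ w) (hL : 1 ≤ L) :
    |A * B * u * v| ≤ L * (A ^ 2 * u ^ 2 + B ^ 2 * v ^ 2 + w) := by
  have h1 : |A * B * u * v| = (|A| * |u|) * (|B| * |v|) := by
    rw [abs_mul, abs_mul, abs_mul]; ring
  rw [h1]
  nlinarith [sq_nonneg (|A| * |u| - |B| * |v|), sq_abs A, sq_abs B, sq_abs u, sq_abs v,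
    mul_nonneg (mul_nonneg (abs_nonneg A) (abs_nonneg u)) (mul_nonneg (abs_nonneg B) (abs_nonneg v)),
    mul_nonneg (sub_nonneg.2 hL) (add_nonneg (add_nonneg (mul_nonneg (sq_nonneg A) (sq_nonneg u)) (mul_nonneg (sq_nonneg B) (sq_nonneg v))) hw),
    mul_nonneg (sub_nonneg.2 hL) (sq_nonneg (|A| * |u| - |B| * |v|))]
lemma cross_heavy {A B u v w L : ℝ} (hA : 0 < A) (hB : 0 < B) (hw : 0 ≤ w)
    (hAB : A ≤ L * B) :
    |A ^ 2 * u * v| ≤ L * (A ^ 2 * u ^ 2 + B ^ 2 * v ^ 2 + w) := by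
  have hL0 : 0 ≤ L := by
    by_contra hneg
    push_neg at hneg
    nlinarith
  have h1 : |A ^ 2 * u * v| = A * (A * |u| * |v|) := by
    rw [abs_mul, abs_mul, abs_pow, sq_abs]; ring
  have h2 : 2 * (A * |u|) * (B * |v|) ≤ A ^ 2 * u ^ 2 + B ^ 2 * v ^ 2 := by
    nlinarith [sq_nonneg (A * |u| - B * |v|), sq_abs u, sq_abs v]
  have h3 : A * (A * |u| * |v|) ≤ (L * B) * (A * |u| * |v|) :=
    mul_le_mul_of_nonneg_right hAB (by positivity)
  have h4 : (L * B) * (A * |u| * |v|) = (L / 2) * (2 * (A * |u|) * (B * |v|)) := by ring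
  have h5 : (L / 2) * (2 * (A * |u|) * (B * |v|)) ≤ (L / 2) * (A ^ 2 * u ^ 2 + B ^ 2 * v ^ 2) :=
    mul_le_mul_of_nonneg_left h2 (by linarith)
  rw [h1]
  nlinarith [mul_nonneg hL0 hw, mul_nonneg hL0 (add_nonneg (mul_nonneg (sq_nonneg A) (sq_nonneg u)) (mul_nonneg (sq_nonneg B) (sq_nonneg v)))]
lemma diag_bound {E S L : ℝ} (hE : 0 ≤ E) (hES : E ≤ S) (hL : 1 ≤ L) :
    |E| ≤ L * S := by
  rw [abs_of_nonneg hE]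
  nlinarith [mul_nonneg (sub_nonneg.2 hL) (hE.trans hES)]
lemma abs_le_of_sq_le {E D : ℝ} (hD : 0 ≤ D) (h : E ^ 2 ≤ D ^ 2) : |E| ≤ D := by
  have h2 := Real.sqrt_le_sqrt h
  rwa [Real.sqrt_sq_eq_abs, Real.sqrt_sq hD] at h2
lemma scale_bound {E D L : ℝ} (h : |E| ≤ D) (hD : 0 ≤ D) (hL : 1 ≤ L) : |E| ≤ L * D := by
  nlinarith [mul_nonneg (sub_nonneg.2 hL) hD]
lemma M1_entry {Ω N L : ℝ} (hΩ : Ω ≠ 0) (hN : 0 < N) (hL2 : 2 ≤ L)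
    (hNa : N ≤ L * |Ω|) (haN : |Ω| ≤ L * N) (ξ : En 3) (i k : Fin 4) :
    |M1 Ω N ξ i k| ≤ L := by
  have ha : 0 < |Ω| := abs_pos.2 hΩ
  have hL1 : (1:ℝ) ≤ L := by linarith
  have hL0 : (0:ℝ) ≤ L := by linarith
  have hS0 : (0:ℝ) ≤ N ^ 2 * (ξ 0) ^ 2 + N ^ 2 * (ξ 1) ^ 2 + Ω ^ 2 * (ξ 2) ^ 2 := by positivity
  have key : ∀ E : ℝ, |E| ≤ L * (N ^ 2 * (ξ 0) ^ 2 + N ^ 2 * (ξ 1) ^ 2 + Ω ^ 2 * (ξ 2) ^ 2) →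
      |((nxp Ω N ξ) ^ 2)⁻¹ * E| ≤ L := by
    intro E hE
    have hsq : (nxp Ω N ξ) ^ 2 = N ^ 2 * (ξ 0) ^ 2 + N ^ 2 * (ξ 1) ^ 2 + Ω ^ 2 * (ξ 2) ^ 2 :=
      Real.sq_sqrt hS0
    rw [hsq]
    exact abs_inv_mul_le hS0 hL0 hE
  have hb0 : |(0:ℝ)| ≤ L * (N ^ 2 * (ξ 0) ^ 2 + N ^ 2 * (ξ 1) ^ 2 + Ω ^ 2 * (ξ 2) ^ 2) := by
    simpa using mul_nonneg hL0 hS0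
  have hbzz : |Ω ^ 2 * (ξ 2) ^ 2| ≤ L * (N ^ 2 * (ξ 0) ^ 2 + N ^ 2 * (ξ 1) ^ 2 + Ω ^ 2 * (ξ 2) ^ 2) :=
    diag_bound (by positivity) (by nlinarith [sq_nonneg (N * ξ 0), sq_nonneg (N * ξ 1)]) hL1
  have hbdiag : |N ^ 2 * ((ξ 0) ^ 2 + (ξ 1) ^ 2)| ≤ L * (N ^ 2 * (ξ 0) ^ 2 + N ^ 2 * (ξ 1) ^ 2 + Ω ^ 2 * (ξ 2) ^ 2) :=
    diag_bound (by positivity) (by nlinarith [sq_nonneg (Ω * ξ 2)]) hL1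
  have hbNxz : |N ^ 2 * ξ 0 * ξ 2| ≤ L * (N ^ 2 * (ξ 0) ^ 2 + N ^ 2 * (ξ 1) ^ 2 + Ω ^ 2 * (ξ 2) ^ 2) := by
    have h := cross_heavy (u := ξ 0) (v := ξ 2) (w := N ^ 2 * (ξ 1) ^ 2) hN ha (by positivity) hNa
    simp only [sq_abs] at h
    linarith [h]
  have hbNyz : |N ^ 2 * ξ 1 * ξ 2| ≤ L * (N ^ 2 * (ξ 0) ^ 2 + N ^ 2 * (ξ 1) ^ 2 + Ω ^ 2 * (ξ 2) ^ 2) := by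
    have h := cross_heavy (u := ξ 1) (v := ξ 2) (w := N ^ 2 * (ξ 0) ^ 2) hN ha (by positivity) hNa
    simp only [sq_abs] at h
    linarith [h]
  have hbOxz : |Ω ^ 2 * ξ 0 * ξ 2| ≤ L * (N ^ 2 * (ξ 0) ^ 2 + N ^ 2 * (ξ 1) ^ 2 + Ω ^ 2 * (ξ 2) ^ 2) := by
    have h := cross_heavy (u := ξ 2) (v := ξ 0) (w := N ^ 2 * (ξ 1) ^ 2) ha hN (by positivity) haN
    simp only [sq_abs] at h
    rw [show Ω ^ 2 * ξ 0 * ξ 2 = Ω ^ 2 * ξ 2 * ξ 0 by ring]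
    linarith [h]
  have hbOyz : |Ω ^ 2 * ξ 1 * ξ 2| ≤ L * (N ^ 2 * (ξ 0) ^ 2 + N ^ 2 * (ξ 1) ^ 2 + Ω ^ 2 * (ξ 2) ^ 2) := by
    have h := cross_heavy (u := ξ 2) (v := ξ 1) (w := N ^ 2 * (ξ 0) ^ 2) ha hN (by positivity) haN
    simp only [sq_abs] at h
    rw [show Ω ^ 2 * ξ 1 * ξ 2 = Ω ^ 2 * ξ 2 * ξ 1 by ring]
    linarith [h]
  have hbmix0 : |Ω * N * ξ 0 * ξ 2| ≤ L * (N ^ 2 * (ξ 0) ^ 2 + N ^ 2 * (ξ 1) ^ 2 + Ω ^ 2 * (ξ 2) ^ 2) := by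
    have h := cross_mixed (A := N) (B := Ω) (u := ξ 0) (v := ξ 2) (w := N ^ 2 * (ξ 1) ^ 2) (by positivity) hL1
    rw [show Ω * N * ξ 0 * ξ 2 = N * Ω * ξ 0 * ξ 2 by ring]
    linarith [h]
  have hbmix1 : |Ω * N * ξ 1 * ξ 2| ≤ L * (N ^ 2 * (ξ 0) ^ 2 + N ^ 2 * (ξ 1) ^ 2 + Ω ^ 2 * (ξ 2) ^ 2) := by
    have h := cross_mixed (A := N) (B := Ω) (u := ξ 1) (v := ξ 2) (w := N ^ 2 * (ξ 0) ^ 2) (by positivity) hL1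
    rw [show Ω * N * ξ 1 * ξ 2 = N * Ω * ξ 1 * ξ 2 by ring]
    linarith [h]
  fin_cases i <;> fin_cases k <;>
    first
      | exact key _ hb0
      | exact key _ hbzz
      | exact key _ hbdiag
      | exact key _ hbNxz
      | exact key _ hbNyz
      | exact key _ hbOxz
      | exact key _ hbOyz
      | exact key _ hbmix0
      | exact key _ hbmix1
      | exact key _ (habs_neg hbNxz)
      | exact key _ (habs_neg hbNyz)
      | exact key _ (habs_neg hbOxz)
      | exact key _ (habs_neg hbOyz)
      | exact key _ (habs_neg hbmix0)
      | exact key _ (habs_neg hbmix1)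
lemma M3_entry {Ω N L : ℝ} (hΩ : Ω ≠ 0) (hN : 0 < N) (hL2 : 2 ≤ L)
    (ξ : En 3) (i k : Fin 4) :
    |M3 Ω N ξ i k| ≤ L := by
  have ha : 0 < |Ω| := abs_pos.2 hΩ
  have hL1 : (1:ℝ) ≤ L := by linarith
  have hL0 : (0:ℝ) ≤ L := by linarith
  have hS0 : (0:ℝ) ≤ N ^ 2 * (ξ 0) ^ 2 + N ^ 2 * (ξ 1) ^ 2 + Ω ^ 2 * (ξ 2) ^ 2 := by positivity
  have key : ∀ E : ℝ, |E| ≤ L * (N ^ 2 * (ξ 0) ^ 2 + N ^ 2 * (ξ 1) ^ 2 + Ω ^ 2 * (ξ 2) ^ 2) →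
      |((nxp Ω N ξ) ^ 2)⁻¹ * E| ≤ L := by
    intro E hE
    have hsq : (nxp Ω N ξ) ^ 2 = N ^ 2 * (ξ 0) ^ 2 + N ^ 2 * (ξ 1) ^ 2 + Ω ^ 2 * (ξ 2) ^ 2 :=
      Real.sq_sqrt hS0
    rw [hsq]
    exact abs_inv_mul_le hS0 hL0 hE
  have hb0 : |(0:ℝ)| ≤ L * (N ^ 2 * (ξ 0) ^ 2 + N ^ 2 * (ξ 1) ^ 2 + Ω ^ 2 * (ξ 2) ^ 2) := by
    simpa using mul_nonneg hL0 hS0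
  have hbzz : |Ω ^ 2 * (ξ 2) ^ 2| ≤ L * (N ^ 2 * (ξ 0) ^ 2 + N ^ 2 * (ξ 1) ^ 2 + Ω ^ 2 * (ξ 2) ^ 2) :=
    diag_bound (by positivity) (by nlinarith [sq_nonneg (N * ξ 0), sq_nonneg (N * ξ 1)]) hL1
  have hbxx : |N ^ 2 * (ξ 0) ^ 2| ≤ L * (N ^ 2 * (ξ 0) ^ 2 + N ^ 2 * (ξ 1) ^ 2 + Ω ^ 2 * (ξ 2) ^ 2) :=
    diag_bound (by positivity) (by nlinarith [sq_nonneg (N * ξ 1), sq_nonneg (Ω * ξ 2)]) hL1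
  have hbyy : |N ^ 2 * (ξ 1) ^ 2| ≤ L * (N ^ 2 * (ξ 0) ^ 2 + N ^ 2 * (ξ 1) ^ 2 + Ω ^ 2 * (ξ 2) ^ 2) :=
    diag_bound (by positivity) (by nlinarith [sq_nonneg (N * ξ 0), sq_nonneg (Ω * ξ 2)]) hL1
  have hbNxy : |N ^ 2 * ξ 0 * ξ 1| ≤ L * (N ^ 2 * (ξ 0) ^ 2 + N ^ 2 * (ξ 1) ^ 2 + Ω ^ 2 * (ξ 2) ^ 2) := by
    have h := cross_same (c := N) (u := ξ 0) (v := ξ 1) (w := Ω ^ 2 * (ξ 2) ^ 2) (by positivity) hL1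
    linarith [h]
  have hbmix0 : |Ω * N * ξ 0 * ξ 2| ≤ L * (N ^ 2 * (ξ 0) ^ 2 + N ^ 2 * (ξ 1) ^ 2 + Ω ^ 2 * (ξ 2) ^ 2) := by
    have h := cross_mixed (A := N) (B := Ω) (u := ξ 0) (v := ξ 2) (w := N ^ 2 * (ξ 1) ^ 2) (by positivity) hL1
    rw [show Ω * N * ξ 0 * ξ 2 = N * Ω * ξ 0 * ξ 2 by ring]
    linarith [h]
  have hbmix1 : |Ω * N * ξ 1 * ξ 2| ≤ L * (N ^ 2 * (ξ 0) ^ 2 + N ^ 2 * (ξ 1) ^ 2 + Ω ^ 2 * (ξ 2) ^ 2) := by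
    have h := cross_mixed (A := N) (B := Ω) (u := ξ 1) (v := ξ 2) (w := N ^ 2 * (ξ 0) ^ 2) (by positivity) hL1
    rw [show Ω * N * ξ 1 * ξ 2 = N * Ω * ξ 1 * ξ 2 by ring]
    linarith [h]
  fin_cases i <;> fin_cases k <;>
    first
      | exact key _ hb0
      | exact key _ hbzz
      | exact key _ hbxx
      | exact key _ hbyy
      | exact key _ hbNxy
      | exact key _ hbmix0
      | exact key _ hbmix1
      | exact key _ (habs_neg hbNxy)
      | exact key _ (habs_neg hbmix0)
      | exact key _ (habs_neg hbmix1)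
set_option maxHeartbeats 1000000 in
lemma M2_entry {Ω N L : ℝ} (hΩ : Ω ≠ 0) (hN : 0 < N) (hL2 : 2 ≤ L)
    (ξ : En 3) (i k : Fin 4) :
    |M2 Ω N ξ i k| ≤ L := by
  have hL1 : (1:ℝ) ≤ L := by linarith
  have hL0 : (0:ℝ) ≤ L := by linarith
  have hS0 : (0:ℝ) ≤ N ^ 2 * (ξ 0) ^ 2 + N ^ 2 * (ξ 1) ^ 2 + Ω ^ 2 * (ξ 2) ^ 2 := by positivity
  have hb0' : (0:ℝ) ≤ ‖ξ‖ := norm_nonneg ξ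
  have hp0 : (0:ℝ) ≤ nxp Ω N ξ := Real.sqrt_nonneg _
  have hD0 : (0:ℝ) ≤ ‖ξ‖ * nxp Ω N ξ := mul_nonneg hb0' hp0
  have hb2 : ‖ξ‖ ^ 2 = (ξ 0) ^ 2 + (ξ 1) ^ 2 + (ξ 2) ^ 2 := by
    rw [EuclideanSpace.norm_eq, Real.sq_sqrt (by positivity), Fin.sum_univ_three]
    simp [sq]
  have hp2 : (nxp Ω N ξ) ^ 2 = N ^ 2 * (ξ 0) ^ 2 + N ^ 2 * (ξ 1) ^ 2 + Ω ^ 2 * (ξ 2) ^ 2 :=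
    Real.sq_sqrt hS0
  have hD2 : (‖ξ‖ * nxp Ω N ξ) ^ 2 =
      ((ξ 0) ^ 2 + (ξ 1) ^ 2 + (ξ 2) ^ 2) * (N ^ 2 * (ξ 0) ^ 2 + N ^ 2 * (ξ 1) ^ 2 + Ω ^ 2 * (ξ 2) ^ 2) := by
    rw [mul_pow, hb2, hp2]
  have key : ∀ E : ℝ, |E| ≤ L * (‖ξ‖ * nxp Ω N ξ) →
      |(‖ξ‖ * nxp Ω N ξ)⁻¹ * E| ≤ L := fun E hE => abs_inv_mul_le hD0 hL0 hE
  have sqb : ∀ E : ℝ, E ^ 2 ≤ (‖ξ‖ * nxp Ω N ξ) ^ 2 → |E| ≤ L * (‖ξ‖ * nxp Ω N ξ) :=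
    fun E hE => scale_bound (abs_le_of_sq_le hD0 hE) hD0 hL1
  have hb0 : |(0:ℝ)| ≤ L * (‖ξ‖ * nxp Ω N ξ) := by simpa using mul_nonneg hL0 hD0
  have hbOz2 : |Ω * (ξ 2) ^ 2| ≤ L * (‖ξ‖ * nxp Ω N ξ) := by
    apply sqb
    rw [hD2]
    have hj : ((ξ 0) ^ 2 + (ξ 1) ^ 2 + (ξ 2) ^ 2) * (N ^ 2 * (ξ 0) ^ 2 + N ^ 2 * (ξ 1) ^ 2 + Ω ^ 2 * (ξ 2) ^ 2) = (Ω * (ξ 2) ^ 2) ^ 2 + (N ^ 2 * (ξ 0) ^ 2 * (ξ 0) ^ 2 + 2 * (N ^ 2 * (ξ 0) ^ 2 * (ξ 1) ^ 2) + Ω ^ 2 * (ξ 0) ^ 2 * (ξ 2) ^ 2 + N ^ 2 * (ξ 1) ^ 2 * (ξ 1) ^ 2 + Ω ^ 2 * (ξ 1) ^ 2 * (ξ 2) ^ 2 + N ^ 2 * (ξ 0) ^ 2 * (ξ 2) ^ 2 + N ^ 2 * (ξ 1) ^ 2 * (ξ 2) ^ 2) := by ring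
    have hjp : (0:ℝ) ≤ N ^ 2 * (ξ 0) ^ 2 * (ξ 0) ^ 2 + 2 * (N ^ 2 * (ξ 0) ^ 2 * (ξ 1) ^ 2) + Ω ^ 2 * (ξ 0) ^ 2 * (ξ 2) ^ 2 + N ^ 2 * (ξ 1) ^ 2 * (ξ 1) ^ 2 + Ω ^ 2 * (ξ 1) ^ 2 * (ξ 2) ^ 2 + N ^ 2 * (ξ 0) ^ 2 * (ξ 2) ^ 2 + N ^ 2 * (ξ 1) ^ 2 * (ξ 2) ^ 2 := by positivity
    rw [hj]
    linarith
  have hbOxz : |Ω * ξ 0 * ξ 2| ≤ L * (‖ξ‖ * nxp Ω N ξ) := by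
    apply sqb
    rw [hD2]
    have hj : ((ξ 0) ^ 2 + (ξ 1) ^ 2 + (ξ 2) ^ 2) * (N ^ 2 * (ξ 0) ^ 2 + N ^ 2 * (ξ 1) ^ 2 + Ω ^ 2 * (ξ 2) ^ 2) = (Ω * ξ 0 * ξ 2) ^ 2 + (N ^ 2 * (ξ 0) ^ 2 * (ξ 0) ^ 2 + 2 * (N ^ 2 * (ξ 0) ^ 2 * (ξ 1) ^ 2) + N ^ 2 * (ξ 1) ^ 2 * (ξ 1) ^ 2 + Ω ^ 2 * (ξ 1) ^ 2 * (ξ 2) ^ 2 + N ^ 2 * (ξ 0) ^ 2 * (ξ 2) ^ 2 + N ^ 2 * (ξ 1) ^ 2 * (ξ 2) ^ 2 + Ω ^ 2 * (ξ 2) ^ 2 * (ξ 2) ^ 2) := by ring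
    have hjp : (0:ℝ) ≤ N ^ 2 * (ξ 0) ^ 2 * (ξ 0) ^ 2 + 2 * (N ^ 2 * (ξ 0) ^ 2 * (ξ 1) ^ 2) + N ^ 2 * (ξ 1) ^ 2 * (ξ 1) ^ 2 + Ω ^ 2 * (ξ 1) ^ 2 * (ξ 2) ^ 2 + N ^ 2 * (ξ 0) ^ 2 * (ξ 2) ^ 2 + N ^ 2 * (ξ 1) ^ 2 * (ξ 2) ^ 2 + Ω ^ 2 * (ξ 2) ^ 2 * (ξ 2) ^ 2 := by positivity
    rw [hj]
    linarith
  have hbOyz : |Ω * ξ 1 * ξ 2| ≤ L * (‖ξ‖ * nxp Ω N ξ) := by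
    apply sqb
    rw [hD2]
    have hj : ((ξ 0) ^ 2 + (ξ 1) ^ 2 + (ξ 2) ^ 2) * (N ^ 2 * (ξ 0) ^ 2 + N ^ 2 * (ξ 1) ^ 2 + Ω ^ 2 * (ξ 2) ^ 2) = (Ω * ξ 1 * ξ 2) ^ 2 + (N ^ 2 * (ξ 0) ^ 2 * (ξ 0) ^ 2 + 2 * (N ^ 2 * (ξ 0) ^ 2 * (ξ 1) ^ 2) + Ω ^ 2 * (ξ 0) ^ 2 * (ξ 2) ^ 2 + N ^ 2 * (ξ 1) ^ 2 * (ξ 1) ^ 2 + N ^ 2 * (ξ 0) ^ 2 * (ξ 2) ^ 2 + N ^ 2 * (ξ 1) ^ 2 * (ξ 2) ^ 2 + Ω ^ 2 * (ξ 2) ^ 2 * (ξ 2) ^ 2) := by ring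
    have hjp : (0:ℝ) ≤ N ^ 2 * (ξ 0) ^ 2 * (ξ 0) ^ 2 + 2 * (N ^ 2 * (ξ 0) ^ 2 * (ξ 1) ^ 2) + Ω ^ 2 * (ξ 0) ^ 2 * (ξ 2) ^ 2 + N ^ 2 * (ξ 1) ^ 2 * (ξ 1) ^ 2 + N ^ 2 * (ξ 0) ^ 2 * (ξ 2) ^ 2 + N ^ 2 * (ξ 1) ^ 2 * (ξ 2) ^ 2 + Ω ^ 2 * (ξ 2) ^ 2 * (ξ 2) ^ 2 := by positivity
    rw [hj]
    linarith
  have hbNxz : |N * ξ 0 * ξ 2| ≤ L * (‖ξ‖ * nxp Ω N ξ) := by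
    apply sqb
    rw [hD2]
    have hj : ((ξ 0) ^ 2 + (ξ 1) ^ 2 + (ξ 2) ^ 2) * (N ^ 2 * (ξ 0) ^ 2 + N ^ 2 * (ξ 1) ^ 2 + Ω ^ 2 * (ξ 2) ^ 2) = (N * ξ 0 * ξ 2) ^ 2 + (N ^ 2 * (ξ 0) ^ 2 * (ξ 0) ^ 2 + 2 * (N ^ 2 * (ξ 0) ^ 2 * (ξ 1) ^ 2) + Ω ^ 2 * (ξ 0) ^ 2 * (ξ 2) ^ 2 + N ^ 2 * (ξ 1) ^ 2 * (ξ 1) ^ 2 + Ω ^ 2 * (ξ 1) ^ 2 * (ξ 2) ^ 2 + N ^ 2 * (ξ 1) ^ 2 * (ξ 2) ^ 2 + Ω ^ 2 * (ξ 2) ^ 2 * (ξ 2) ^ 2) := by ring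
    have hjp : (0:ℝ) ≤ N ^ 2 * (ξ 0) ^ 2 * (ξ 0) ^ 2 + 2 * (N ^ 2 * (ξ 0) ^ 2 * (ξ 1) ^ 2) + Ω ^ 2 * (ξ 0) ^ 2 * (ξ 2) ^ 2 + N ^ 2 * (ξ 1) ^ 2 * (ξ 1) ^ 2 + Ω ^ 2 * (ξ 1) ^ 2 * (ξ 2) ^ 2 + N ^ 2 * (ξ 1) ^ 2 * (ξ 2) ^ 2 + Ω ^ 2 * (ξ 2) ^ 2 * (ξ 2) ^ 2 := by positivity
    rw [hj]
    linarith
  have hbNyz : |N * ξ 1 * ξ 2| ≤ L * (‖ξ‖ * nxp Ω N ξ) := by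
    apply sqb
    rw [hD2]
    have hj : ((ξ 0) ^ 2 + (ξ 1) ^ 2 + (ξ 2) ^ 2) * (N ^ 2 * (ξ 0) ^ 2 + N ^ 2 * (ξ 1) ^ 2 + Ω ^ 2 * (ξ 2) ^ 2) = (N * ξ 1 * ξ 2) ^ 2 + (N ^ 2 * (ξ 0) ^ 2 * (ξ 0) ^ 2 + 2 * (N ^ 2 * (ξ 0) ^ 2 * (ξ 1) ^ 2) + Ω ^ 2 * (ξ 0) ^ 2 * (ξ 2) ^ 2 + N ^ 2 * (ξ 1) ^ 2 * (ξ 1) ^ 2 + Ω ^ 2 * (ξ 1) ^ 2 * (ξ 2) ^ 2 + N ^ 2 * (ξ 0) ^ 2 * (ξ 2) ^ 2 + Ω ^ 2 * (ξ 2) ^ 2 * (ξ 2) ^ 2) := by ring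
    have hjp : (0:ℝ) ≤ N ^ 2 * (ξ 0) ^ 2 * (ξ 0) ^ 2 + 2 * (N ^ 2 * (ξ 0) ^ 2 * (ξ 1) ^ 2) + Ω ^ 2 * (ξ 0) ^ 2 * (ξ 2) ^ 2 + N ^ 2 * (ξ 1) ^ 2 * (ξ 1) ^ 2 + Ω ^ 2 * (ξ 1) ^ 2 * (ξ 2) ^ 2 + N ^ 2 * (ξ 0) ^ 2 * (ξ 2) ^ 2 + Ω ^ 2 * (ξ 2) ^ 2 * (ξ 2) ^ 2 := by positivity
    rw [hj]
    linarith
  have hbNd : |N * ((ξ 0) ^ 2 + (ξ 1) ^ 2)| ≤ L * (‖ξ‖ * nxp Ω N ξ) := by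
    apply sqb
    rw [hD2]
    have hj : ((ξ 0) ^ 2 + (ξ 1) ^ 2 + (ξ 2) ^ 2) * (N ^ 2 * (ξ 0) ^ 2 + N ^ 2 * (ξ 1) ^ 2 + Ω ^ 2 * (ξ 2) ^ 2) = (N * ((ξ 0) ^ 2 + (ξ 1) ^ 2)) ^ 2 + (Ω ^ 2 * (ξ 0) ^ 2 * (ξ 2) ^ 2 + Ω ^ 2 * (ξ 1) ^ 2 * (ξ 2) ^ 2 + N ^ 2 * (ξ 0) ^ 2 * (ξ 2) ^ 2 + N ^ 2 * (ξ 1) ^ 2 * (ξ 2) ^ 2 + Ω ^ 2 * (ξ 2) ^ 2 * (ξ 2) ^ 2) := by ring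
    have hjp : (0:ℝ) ≤ Ω ^ 2 * (ξ 0) ^ 2 * (ξ 2) ^ 2 + Ω ^ 2 * (ξ 1) ^ 2 * (ξ 2) ^ 2 + N ^ 2 * (ξ 0) ^ 2 * (ξ 2) ^ 2 + N ^ 2 * (ξ 1) ^ 2 * (ξ 2) ^ 2 + Ω ^ 2 * (ξ 2) ^ 2 * (ξ 2) ^ 2 := by positivity
    rw [hj]
    linarith
  fin_cases i <;> fin_cases k <;>
    first
      | exact key _ hb0
      | exact key _ hbOz2
      | exact key _ hbOxz
      | exact key _ hbOyz
      | exact key _ hbNxz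
      | exact key _ hbNyz
      | exact key _ hbNd
      | exact key _ (habs_neg hbOz2)
      | exact key _ (habs_neg hbOxz)
      | exact key _ (habs_neg hbOyz)
      | exact key _ (habs_neg hbNxz)
      | exact key _ (habs_neg hbNyz)
      | exact key _ (habs_neg hbNd)
lemma symS_entry {Ω N L : ℝ} (hΩ : Ω ≠ 0) (hN : 0 < N) (hL2 : 2 ≤ L)
    (hNa : N ≤ L * |Ω|) (haN : |Ω| ≤ L * N) (ν α t : ℝ) (ξ : En 3) (i k : Fin 4) :
    |symS ν α Ω N t ξ i k| ≤ Real.exp (-(ν * t * ‖ξ‖ ^ (2 * α))) * (3 * L) := by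
  have h1 : symS ν α Ω N t ξ i k = Real.exp (-(ν * t * ‖ξ‖ ^ (2 * α))) *
      (Real.cos (t * nxp Ω N ξ / ‖ξ‖) * M1 Ω N ξ i k +
        Real.sin (t * nxp Ω N ξ / ‖ξ‖) * M2 Ω N ξ i k + M3 Ω N ξ i k) := rfl
  rw [h1, abs_mul, Real.abs_exp]
  refine mul_le_mul_of_nonneg_left ?_ (Real.exp_pos _).le
  have hM1 := M1_entry hΩ hN hL2 hNa haN ξ i k
  have hM2 := M2_entry hΩ hN hL2 ξ i k
  have hM3 := M3_entry hΩ hN hL2 ξ i k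
  calc |Real.cos (t * nxp Ω N ξ / ‖ξ‖) * M1 Ω N ξ i k +
        Real.sin (t * nxp Ω N ξ / ‖ξ‖) * M2 Ω N ξ i k + M3 Ω N ξ i k|
      ≤ |Real.cos (t * nxp Ω N ξ / ‖ξ‖) * M1 Ω N ξ i k| +
        |Real.sin (t * nxp Ω N ξ / ‖ξ‖) * M2 Ω N ξ i k| + |M3 Ω N ξ i k| := abs_add_three _ _ _
    _ ≤ 3 * L := by
        rw [abs_mul, abs_mul]
        have hc := Real.abs_cos_le_one (t * nxp Ω N ξ / ‖ξ‖)
        have hs := Real.abs_sin_le_one (t * nxp Ω N ξ / ‖ξ‖)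
        have h2 : |Real.cos (t * nxp Ω N ξ / ‖ξ‖)| * |M1 Ω N ξ i k| ≤ 1 * L :=
          mul_le_mul hc hM1 (abs_nonneg _) zero_le_one
        have h3 : |Real.sin (t * nxp Ω N ξ / ‖ξ‖)| * |M2 Ω N ξ i k| ≤ 1 * L :=
          mul_le_mul hs hM2 (abs_nonneg _) zero_le_one
        linarith
lemma applyS_norm_le {Ω N L : ℝ} (hΩ : Ω ≠ 0) (hN : 0 < N) (hL2 : 2 ≤ L)
    (hNa : N ≤ L * |Ω|) (haN : |Ω| ≤ L * N) (ν α t : ℝ) (v0 : En 3 → Fin 4 → ℂ) (ξ : En 3) :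
    ‖applyS ν α Ω N t v0 ξ‖ ≤ Real.exp (-(ν * t * ‖ξ‖ ^ (2 * α))) * (12 * L) * ‖v0 ξ‖ := by
  have hL0 : (0:ℝ) ≤ L := by linarith
  have hBpos : (0:ℝ) ≤ Real.exp (-(ν * t * ‖ξ‖ ^ (2 * α))) * (12 * L) * ‖v0 ξ‖ := by positivity
  rw [show applyS ν α Ω N t v0 ξ = ((symS ν α Ω N t ξ).map (fun x : ℝ => (x : ℂ))).mulVec (v0 ξ) from rfl]
  refine (pi_norm_le_iff_of_nonneg hBpos).2 fun i => ?_
  have h1 : ((symS ν α Ω N t ξ).map (fun x : ℝ => (x : ℂ))).mulVec (v0 ξ) i =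
      ∑ k : Fin 4, ((symS ν α Ω N t ξ i k : ℝ) : ℂ) * v0 ξ k := rfl
  rw [h1]
  calc ‖∑ k : Fin 4, ((symS ν α Ω N t ξ i k : ℝ) : ℂ) * v0 ξ k‖
      ≤ ∑ k : Fin 4, ‖((symS ν α Ω N t ξ i k : ℝ) : ℂ) * v0 ξ k‖ := norm_sum_le _ _
    _ ≤ ∑ k : Fin 4, Real.exp (-(ν * t * ‖ξ‖ ^ (2 * α))) * (3 * L) * ‖v0 ξ‖ := by
        refine Finset.sum_le_sum fun k _ => ?_
        rw [norm_mul, Complex.norm_real]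
        have h2 := symS_entry hΩ hN hL2 hNa haN ν α t ξ i k
        have h3 : ‖v0 ξ k‖ ≤ ‖v0 ξ‖ := norm_le_pi_norm (v0 ξ) k
        exact mul_le_mul h2 h3 (norm_nonneg _) (by positivity)
    _ = Real.exp (-(ν * t * ‖ξ‖ ^ (2 * α))) * (12 * L) * ‖v0 ξ‖ := by
        rw [Finset.sum_const, Finset.card_univ]
        simp [Fintype.card_fin]
        ring
lemma morreyNorm_le_of_le {n : ℕ} {F G : Type*} [NormedAddCommGroup F] [NormedSpace ℝ F] [NormedAddCommGroup G]
    {q μ : ℝ} {f : En n → F} {g : En n → G} {c : ℝ} (hc : 0 ≤ c)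
    (h : ∀ ξ, ‖g ξ‖ ≤ c * ‖f ξ‖) :
    morreyNorm q μ g ≤ ENNReal.ofReal c * morreyNorm q μ f := by
  refine iSup_le fun x₀ => iSup_le fun d => iSup_le fun hd => ?_
  have h1 : ∀ (p : ℝ≥0∞) (m : Measure (En n)), eLpNorm g p m ≤ ENNReal.ofReal c * eLpNorm f p m := by
    intro p m
    calc eLpNorm g p m ≤ eLpNorm (fun ξ => c • f ξ) p m := by
          apply eLpNorm_mono
          intro ξ
          rw [norm_smul, Real.norm_eq_abs, abs_of_nonneg hc]
          exact h ξ
      _ ≤ ‖c‖₊ • eLpNorm f p m := eLpNorm_const_smul_le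
      _ = ENNReal.ofReal c * eLpNorm f p m := by
          rw [ENNReal.smul_def, smul_eq_mul, ← ENNReal.ofReal_coe_nnreal, coe_nnnorm,
            Real.norm_eq_abs, abs_of_nonneg hc]
  calc ENNReal.ofReal (d ^ (-(μ / q))) * eLpNorm g (ENNReal.ofReal q) (volume.restrict (Metric.ball x₀ d))
      ≤ ENNReal.ofReal (d ^ (-(μ / q))) * (ENNReal.ofReal c * eLpNorm f (ENNReal.ofReal q) (volume.restrict (Metric.ball x₀ d))) :=
        mul_le_mul_right (h1 _ _) _
    _ = ENNReal.ofReal c * (ENNReal.ofReal (d ^ (-(μ / q))) * eLpNorm f (ENNReal.ofReal q) (volume.restrict (Metric.ball x₀ d))) := by ring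
    _ ≤ ENNReal.ofReal c * morreyNorm q μ f := by
        refine mul_le_mul_right ?_ _
        exact le_iSup_of_le x₀ (le_iSup_of_le d (le_iSup_of_le hd le_rfl))
lemma morrey_bernstein_s10 {F : Type*} [NormedAddCommGroup F] {q₁ q₂ μ R : ℝ}
    (hq₂ : 1 ≤ q₂) (hq : q₂ ≤ q₁) (hμ0 : 0 ≤ μ) (hμ3 : μ < 3) (hR : 0 < R)
    {f : En 3 → F} (hf : AEStronglyMeasurable f volume)
    (hsupp : ∀ ξ, ξ ∉ Metric.closedBall (0 : En 3) R → f ξ = 0) :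
    morreyNorm q₂ μ f ≤
      (volume (Metric.ball (0 : En 3) 1)) ^ (1 / q₂ - 1 / q₁) *
        ENNReal.ofReal (R ^ ((3 - μ) * (1 / q₂ - 1 / q₁))) * morreyNorm q₁ μ f := by
  have hq₂0 : (0:ℝ) < q₂ := by linarith
  have hq₁0 : (0:ℝ) < q₁ := by linarith
  set δ := 1 / q₂ - 1 / q₁ with hδdef
  have hδ0 : 0 ≤ δ := by
    have := one_div_le_one_div_of_le hq₂0 hq
    simp only [hδdef]; linarith
  set V := volume (Metric.ball (0 : En 3) 1) with hVdef
  refine iSup_le fun x₀ => iSup_le fun d => iSup_le fun hd => ?_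
  set A := Metric.closedBall (0 : En 3) R with hAdef
  have hA : MeasurableSet A := measurableSet_closedBall
  have hfind : f = A.indicator f := by
    funext ξ
    by_cases hξ : ξ ∈ A
    · rw [Set.indicator_of_mem hξ]
    · rw [Set.indicator_of_notMem hξ, hsupp ξ hξ]
  set B := Metric.ball x₀ d with hBdef
  have h1 : eLpNorm f (ENNReal.ofReal q₂) (volume.restrict B) =
      eLpNorm f (ENNReal.ofReal q₂) (volume.restrict (A ∩ B)) := by
    conv_lhs => rw [hfind]
    rw [eLpNorm_indicator_eq_eLpNorm_restrict hA, Measure.restrict_restrict hA]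
  have h2 : eLpNorm f (ENNReal.ofReal q₂) (volume.restrict (A ∩ B)) ≤
      eLpNorm f (ENNReal.ofReal q₁) (volume.restrict (A ∩ B)) * (volume (A ∩ B)) ^ δ := by
    have h := eLpNorm_le_eLpNorm_mul_rpow_measure_univ
      (p := ENNReal.ofReal q₂) (q := ENNReal.ofReal q₁) (μ := volume.restrict (A ∩ B))
      (ENNReal.ofReal_le_ofReal hq) (hf.restrict (s := A ∩ B))
    rwa [Measure.restrict_apply_univ, ENNReal.toReal_ofReal hq₂0.le,
      ENNReal.toReal_ofReal hq₁0.le] at h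
  have h3 : eLpNorm f (ENNReal.ofReal q₁) (volume.restrict (A ∩ B)) ≤
      eLpNorm f (ENNReal.ofReal q₁) (volume.restrict B) :=
    eLpNorm_mono_measure f (Measure.restrict_mono Set.inter_subset_right le_rfl)
  have hfinrank : (Nat.card (Fin 3)) = 3 := by simp
  have hvol_ball : ∀ (x : En 3) (r : ℝ), 0 ≤ r →
      volume (Metric.ball x r) = ENNReal.ofReal (r ^ (3:ℕ)) * V := by
    intro x r hr
    rw [hVdef, Measure.addHaar_ball volume x hr, finrank_euclideanSpace_fin]
  have hvol_cball : volume A = ENNReal.ofReal (R ^ (3:ℕ)) * V := by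
    rw [hAdef, hVdef, Measure.addHaar_closedBall volume 0 hR.le, finrank_euclideanSpace_fin]
  have h4 : volume (A ∩ B) ≤ ENNReal.ofReal ((min d R) ^ (3:ℕ)) * V := by
    rcases le_total d R with hdR | hRd
    · rw [min_eq_left hdR]
      calc volume (A ∩ B) ≤ volume B := measure_mono Set.inter_subset_right
        _ = ENNReal.ofReal (d ^ (3:ℕ)) * V := hvol_ball x₀ d hd.le
    · rw [min_eq_right hRd]
      calc volume (A ∩ B) ≤ volume A := measure_mono Set.inter_subset_left
        _ = ENNReal.ofReal (R ^ (3:ℕ)) * V := hvol_cball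
  have hm0 : 0 < min d R := lt_min hd hR
  have h5 : (volume (A ∩ B)) ^ δ ≤ ENNReal.ofReal ((min d R) ^ (3 * δ)) * V ^ δ := by
    calc (volume (A ∩ B)) ^ δ ≤ (ENNReal.ofReal ((min d R) ^ (3:ℕ)) * V) ^ δ :=
          ENNReal.rpow_le_rpow h4 hδ0
      _ = (ENNReal.ofReal ((min d R) ^ (3:ℕ))) ^ δ * V ^ δ :=
          ENNReal.mul_rpow_of_nonneg _ _ hδ0
      _ = ENNReal.ofReal ((min d R) ^ (3 * δ)) * V ^ δ := by
          rw [ENNReal.ofReal_rpow_of_pos (by positivity), ← Real.rpow_natCast (min d R) 3,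
            ← Real.rpow_mul hm0.le]
          norm_num
  -- real exponent comparison
  have hreal : d ^ (-(μ / q₂)) * (min d R) ^ (3 * δ) ≤
      R ^ ((3 - μ) * δ) * d ^ (-(μ / q₁)) := by
    have hkey : (min d R) ^ (3 * δ) * d ^ (-(μ * δ)) ≤ R ^ ((3 - μ) * δ) := by
      rcases le_total d R with hdR | hRd
      · rw [min_eq_left hdR]
        calc d ^ (3 * δ) * d ^ (-(μ * δ)) = d ^ ((3 - μ) * δ) := by
              rw [← Real.rpow_add hd]; ring_nf
          _ ≤ R ^ ((3 - μ) * δ) := Real.rpow_le_rpow hd.le hdR (by nlinarith)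
      · rw [min_eq_right hRd]
        calc R ^ (3 * δ) * d ^ (-(μ * δ)) ≤ R ^ (3 * δ) * R ^ (-(μ * δ)) := by
              apply mul_le_mul_of_nonneg_left _ (Real.rpow_nonneg hR.le _)
              rcases eq_or_lt_of_le (mul_nonneg hμ0 hδ0) with h0 | hpos
              · rw [← h0]; simp
              · exact Real.rpow_le_rpow_of_nonpos hR hRd (by linarith)
          _ = R ^ ((3 - μ) * δ) := by rw [← Real.rpow_add hR]; ring_nf
    have e1 : d ^ (-(μ / q₂)) = d ^ (-(μ / q₁)) * d ^ (-(μ * δ)) := by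
      rw [← Real.rpow_add hd]
      congr 1
      rw [hδdef]
      field_simp
      ring
    rw [e1]
    calc d ^ (-(μ / q₁)) * d ^ (-(μ * δ)) * (min d R) ^ (3 * δ)
        = ((min d R) ^ (3 * δ) * d ^ (-(μ * δ))) * d ^ (-(μ / q₁)) := by ring
      _ ≤ R ^ ((3 - μ) * δ) * d ^ (-(μ / q₁)) :=
          mul_le_mul_of_nonneg_right hkey (Real.rpow_nonneg hd.le _)
  -- assemble
  calc ENNReal.ofReal (d ^ (-(μ / q₂))) * eLpNorm f (ENNReal.ofReal q₂) (volume.restrict B)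
      ≤ ENNReal.ofReal (d ^ (-(μ / q₂))) *
        (eLpNorm f (ENNReal.ofReal q₁) (volume.restrict B) *
          (ENNReal.ofReal ((min d R) ^ (3 * δ)) * V ^ δ)) := by
        rw [h1]
        exact mul_le_mul_right (h2.trans (mul_le_mul (h3) h5 bot_le bot_le)) _
    _ = V ^ δ * (ENNReal.ofReal (d ^ (-(μ / q₂))) * ENNReal.ofReal ((min d R) ^ (3 * δ))) *
        eLpNorm f (ENNReal.ofReal q₁) (volume.restrict B) := by ring
    _ ≤ V ^ δ * ENNReal.ofReal (R ^ ((3 - μ) * δ) * d ^ (-(μ / q₁))) *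
        eLpNorm f (ENNReal.ofReal q₁) (volume.restrict B) := by
        refine mul_le_mul_left (mul_le_mul_right ?_ _) _
        rw [← ENNReal.ofReal_mul (by positivity)]
        exact ENNReal.ofReal_le_ofReal hreal
    _ = V ^ δ * ENNReal.ofReal (R ^ ((3 - μ) * δ)) *
        (ENNReal.ofReal (d ^ (-(μ / q₁))) * eLpNorm f (ENNReal.ofReal q₁) (volume.restrict B)) := by
        rw [ENNReal.ofReal_mul (by positivity)]
        ring
    _ ≤ V ^ δ * ENNReal.ofReal (R ^ ((3 - μ) * δ)) * morreyNorm q₁ μ f := by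
        refine mul_le_mul_right ?_ _
        exact le_iSup_of_le x₀ (le_iSup_of_le d (le_iSup_of_le hd le_rfl))
lemma lrNorm_le_mul {r : ℝ≥0∞} (hr : 1 ≤ r) {c : ℝ≥0∞} {a b : ℤ → ℝ≥0∞}
    (h : ∀ j, a j ≤ c * b j) : lrNorm r a ≤ c * lrNorm r b := by
  rw [lrNorm, lrNorm]
  by_cases htop : r = ⊤
  · rw [if_pos htop, if_pos htop]
    exact iSup_le fun j => (h j).trans (mul_le_mul_right (le_iSup b j) c)
  · rw [if_neg htop, if_neg htop]
    have hρ1 : 1 ≤ r.toReal := by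
      have := ENNReal.toReal_mono htop hr
      simpa using this
    have hρ0 : 0 < r.toReal := by linarith
    have hρ0' : 0 ≤ r.toReal := hρ0.le
    have hinv0 : 0 ≤ 1 / r.toReal := by positivity
    calc (∑' j, a j ^ r.toReal) ^ (1 / r.toReal)
        ≤ (∑' j, (c * b j) ^ r.toReal) ^ (1 / r.toReal) := by
          apply ENNReal.rpow_le_rpow _ hinv0
          exact ENNReal.tsum_le_tsum fun j => ENNReal.rpow_le_rpow (h j) hρ0'
      _ = (c ^ r.toReal * ∑' j, b j ^ r.toReal) ^ (1 / r.toReal) := by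
          rw [← ENNReal.tsum_mul_left]
          congr 1
          exact tsum_congr fun j => ENNReal.mul_rpow_of_nonneg _ _ hρ0'
      _ = c * (∑' j, b j ^ r.toReal) ^ (1 / r.toReal) := by
          rw [ENNReal.mul_rpow_of_nonneg _ _ hinv0, ← ENNReal.rpow_mul,
            mul_one_div_cancel (ne_of_gt hρ0), ENNReal.rpow_one]
lemma rpow_mul_exp_le {σ : ℝ} (hσ : 0 ≤ σ) :
    ∃ C > 0, ∀ y : ℝ, 0 < y → y ^ σ * Real.exp (-y) ≤ C := by
  rcases eq_or_lt_of_le hσ with h0 | hpos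
  · refine ⟨1, one_pos, fun y hy => ?_⟩
    rw [← h0, Real.rpow_zero, one_mul]
    exact (Real.exp_le_one_iff.2 (by linarith)).trans le_rfl
  · refine ⟨σ ^ σ, Real.rpow_pos_of_pos hpos σ, fun y hy => ?_⟩
    have hlog : Real.log (y / σ) ≤ y / σ - 1 := Real.log_le_sub_one_of_pos (by positivity)
    have hlog2 : σ * Real.log y - y ≤ σ * Real.log σ - σ := by
      rw [Real.log_div (ne_of_gt hy) (ne_of_gt hpos)] at hlog
      have := mul_le_mul_of_nonneg_left hlog hσ
      have hexp : σ * (y / σ - 1) = y - σ := by field_simp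
      nlinarith
    calc y ^ σ * Real.exp (-y) = Real.exp (σ * Real.log y - y) := by
          rw [Real.rpow_def_of_pos hy, Real.exp_sub, Real.exp_neg, mul_comm (Real.log y) σ, div_eq_mul_inv]
      _ ≤ Real.exp (σ * Real.log σ - σ) := Real.exp_le_exp.2 hlog2
      _ ≤ Real.exp (σ * Real.log σ) := Real.exp_le_exp.2 (by linarith)
      _ = σ ^ σ := by rw [Real.rpow_def_of_pos hpos, mul_comm]
lemma decay_bound {β α' : ℝ} (hβ : 0 ≤ β) (hα' : 0 < α') :
    ∃ C > 0, ∀ ν t w : ℝ, 0 < ν → 0 < t → 0 < w →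
      w ^ β * Real.exp (-(ν * t * w ^ α')) ≤ C * (ν * t) ^ (-(β / α')) := by
  have hσ0 : 0 ≤ β / α' := by positivity
  obtain ⟨C, hC0, hC⟩ := rpow_mul_exp_le hσ0
  refine ⟨C, hC0, fun ν t w hν ht hw => ?_⟩
  set σ := β / α' with hσdef
  have hνt : 0 < ν * t := mul_pos hν ht
  have hy : 0 < ν * t * w ^ α' := by positivity
  have h1 : (ν * t * w ^ α') ^ σ = (ν * t) ^ σ * w ^ β := by
    rw [Real.mul_rpow hνt.le (Real.rpow_nonneg hw.le _), ← Real.rpow_mul hw.le]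
    congr 2
    rw [hσdef]
    field_simp
    try ring
  have h2 : w ^ β = (ν * t * w ^ α') ^ σ * (ν * t) ^ (-σ) := by
    rw [h1, Real.rpow_neg hνt.le]
    field_simp [ne_of_gt (Real.rpow_pos_of_pos hνt σ)]
    try ring
  calc w ^ β * Real.exp (-(ν * t * w ^ α'))
      = ((ν * t * w ^ α') ^ σ * Real.exp (-(ν * t * w ^ α'))) * (ν * t) ^ (-σ) := by
        rw [h2]; ring
    _ ≤ C * (ν * t) ^ (-σ) :=
        mul_le_mul_of_nonneg_right (hC _ hy) (Real.rpow_nonneg hνt.le _)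

/-- Smoothing estimate for the fractional Boussinesq–Coriolis–Stratification semigroup:
`‖S^α_{Ω,N}(t)v₀‖_{FN^s_{q₂,μ,r}} ≤ C L ν^{-σ} t^{-σ} ‖v₀‖_{FN^s_{q₁,μ,r}}` with
`σ = (1/(2α))((3−μ)/q₂ − (3−μ)/q₁)`, `C` independent of `Ω` and `N`. -/
theorem semigroup_smoothing_estimate (μ q₁ q₂ s α : ℝ) (r : ℝ≥0∞)
    (hμ : 0 ≤ μ) (hμ' : μ < 3) (hq₂ : 1 ≤ q₂) (hq : q₂ ≤ q₁)
    (hr : 1 ≤ r) (hα : 1 / 2 ≤ α) (hα' : α < 5 / 2)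
    (φ : En 3 → ℝ) (hφ : IsLP φ) :
    ∃ C > (0 : ℝ), ∀ ν > (0 : ℝ), ∀ Ω : ℝ, Ω ≠ 0 → ∀ N > (0 : ℝ), ∀ t > (0 : ℝ),
      ∀ v0 : En 3 → Fin 4 → ℂ, AEStronglyMeasurable v0 volume →
        fbmNorm s q₁ μ r φ v0 < ⊤ →
        fbmNorm s q₂ μ r φ (applyS ν α Ω N t v0) ≤
          ENNReal.ofReal (C * max 2 (max (|Ω| / N) (N / |Ω|)) *
              ν ^ (-(1 / (2 * α)) * ((3 - μ) / q₂ - (3 - μ) / q₁)) *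
              t ^ (-(1 / (2 * α)) * ((3 - μ) / q₂ - (3 - μ) / q₁))) *
            fbmNorm s q₁ μ r φ v0 := by
  have hq₂0 : (0:ℝ) < q₂ := by linarith
  have hq₁0 : (0:ℝ) < q₁ := by linarith
  set δ := 1 / q₂ - 1 / q₁ with hδdef
  have hδ0 : 0 ≤ δ := by
    have := one_div_le_one_div_of_le hq₂0 hq
    rw [hδdef]; linarith
  set β := (3 - μ) * δ with hβdef
  have hβ0 : 0 ≤ β := mul_nonneg (by linarith) hδ0
  have hα0 : (0:ℝ) < 2 * α := by linarith
  obtain ⟨C₀, hC₀, hdecay⟩ := decay_bound hβ0 hα0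
  set V := volume (Metric.ball (0 : En 3) 1) with hVdef
  have hVfin : V ^ δ ≠ ⊤ := ENNReal.rpow_ne_top_of_nonneg hδ0 measure_ball_lt_top.ne
  set CV := (V ^ δ).toReal + 1 with hCVdef
  have hCV0 : 0 < CV := by
    rw [hCVdef]
    have := ENNReal.toReal_nonneg (a := V ^ δ)
    linarith
  have hVle : V ^ δ ≤ ENNReal.ofReal CV := by
    rw [← ENNReal.ofReal_toReal hVfin]
    exact ENNReal.ofReal_le_ofReal (by rw [hCVdef]; linarith)
  refine ⟨12 * CV * (32 / 9 : ℝ) ^ β * C₀, by positivity, ?_⟩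
  intro ν hν Ω hΩ N hN t ht v0 hv0 _hfin
  set L := max 2 (max (|Ω| / N) (N / |Ω|)) with hLdef
  have ha : 0 < |Ω| := abs_pos.2 hΩ
  have hL2 : (2:ℝ) ≤ L := le_max_left _ _
  have hL0 : (0:ℝ) ≤ L := by linarith
  have hNa : N ≤ L * |Ω| := by
    have h1 : N / |Ω| ≤ L := le_trans (le_max_right _ _) (le_max_right _ _)
    calc N = (N / |Ω|) * |Ω| := by field_simp
    _ ≤ L * |Ω| := mul_le_mul_of_nonneg_right h1 ha.le
  have haN : |Ω| ≤ L * N := by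
    have h1 : |Ω| / N ≤ L := le_trans (le_max_left _ _) (le_max_right _ _)
    calc |Ω| = (|Ω| / N) * N := by field_simp
    _ ≤ L * N := mul_le_mul_of_nonneg_right h1 hN.le
  set σE := -(1 / (2 * α)) * ((3 - μ) / q₂ - (3 - μ) / q₁) with hσEdef
  have hσE : σE = -(β / (2 * α)) := by rw [hσEdef, hβdef, hδdef]; ring
  rw [fbmNorm, fbmNorm]
  apply lrNorm_le_mul hr
  intro j
  have h2jpos : (0:ℝ) < (2:ℝ) ^ j := by positivity
  set wj := (3 / 4 : ℝ) * (2:ℝ) ^ j with hwjdef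
  set Rj := (8 / 3 : ℝ) * (2:ℝ) ^ j with hRjdef
  have hwj0 : 0 < wj := by rw [hwjdef]; positivity
  have hRj0 : 0 < Rj := by rw [hRjdef]; positivity
  set ej := Real.exp (-(ν * t * wj ^ (2 * α))) with hejdef
  have hej0 : 0 < ej := Real.exp_pos _
  -- bounds on ‖ξ‖ on the support of φ_j
  have hsupp_norm : ∀ ξ : En 3, φ ((2:ℝ) ^ (-j) • ξ) ≠ 0 → wj ≤ ‖ξ‖ ∧ ‖ξ‖ ≤ Rj := by
    intro ξ hzero
    obtain ⟨hlo, hhi⟩ := hφ.2.2.2.1 _ hzero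
    have hnorm' : ‖(2:ℝ) ^ (-j) • ξ‖ = ((2:ℝ) ^ j)⁻¹ * ‖ξ‖ := by
      rw [norm_smul, Real.norm_eq_abs,
        abs_of_pos (by positivity : (0:ℝ) < (2:ℝ) ^ (-j)), zpow_neg]
    rw [hnorm'] at hlo hhi
    constructor
    · have h := mul_le_mul_of_nonneg_left hlo h2jpos.le
      rw [mul_inv_cancel_left₀ (ne_of_gt h2jpos)] at h
      rw [hwjdef]; linarith
    · have h := mul_le_mul_of_nonneg_left hhi h2jpos.le
      rw [mul_inv_cancel_left₀ (ne_of_gt h2jpos)] at h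
      rw [hRjdef]; linarith
  -- pointwise estimate
  have hpoint : ∀ ξ : En 3, ‖φ ((2:ℝ) ^ (-j) • ξ) • applyS ν α Ω N t v0 ξ‖ ≤
      (12 * L * ej) * ‖φ ((2:ℝ) ^ (-j) • ξ) • v0 ξ‖ := by
    intro ξ
    by_cases hzero : φ ((2:ℝ) ^ (-j) • ξ) = 0
    · simp only [hzero, zero_smul, norm_zero]
      positivity
    · obtain ⟨hξlo, hξhi⟩ := hsupp_norm ξ hzero
      have happ := applyS_norm_le hΩ hN hL2 hNa haN ν α t v0 ξ
      have hexp : Real.exp (-(ν * t * ‖ξ‖ ^ (2 * α))) ≤ ej := by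
        rw [hejdef]
        apply Real.exp_le_exp.2
        apply neg_le_neg
        exact mul_le_mul_of_nonneg_left
          (Real.rpow_le_rpow hwj0.le hξlo hα0.le) (by positivity)
      calc ‖φ ((2:ℝ) ^ (-j) • ξ) • applyS ν α Ω N t v0 ξ‖
          = |φ ((2:ℝ) ^ (-j) • ξ)| * ‖applyS ν α Ω N t v0 ξ‖ := by
            rw [norm_smul, Real.norm_eq_abs]
        _ ≤ |φ ((2:ℝ) ^ (-j) • ξ)| *
            (Real.exp (-(ν * t * ‖ξ‖ ^ (2 * α))) * (12 * L) * ‖v0 ξ‖) :=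
            mul_le_mul_of_nonneg_left happ (abs_nonneg _)
        _ ≤ |φ ((2:ℝ) ^ (-j) • ξ)| * (ej * (12 * L) * ‖v0 ξ‖) := by
            refine mul_le_mul_of_nonneg_left ?_ (abs_nonneg _)
            refine mul_le_mul_of_nonneg_right ?_ (norm_nonneg _)
            exact mul_le_mul_of_nonneg_right hexp (by positivity)
        _ = (12 * L * ej) * (|φ ((2:ℝ) ^ (-j) • ξ)| * ‖v0 ξ‖) := by ring
        _ = (12 * L * ej) * ‖φ ((2:ℝ) ^ (-j) • ξ) • v0 ξ‖ := by
            rw [norm_smul, Real.norm_eq_abs]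
  -- support of f_j
  have hsupp : ∀ ξ : En 3, ξ ∉ Metric.closedBall (0 : En 3) Rj →
      (fun ξ => φ ((2:ℝ) ^ (-j) • ξ) • v0 ξ) ξ = 0 := by
    intro ξ hmem
    by_cases hzero : φ ((2:ℝ) ^ (-j) • ξ) = 0
    · simp only [hzero, zero_smul]
    · exfalso
      apply hmem
      rw [Metric.mem_closedBall, dist_eq_norm, sub_zero]
      exact (hsupp_norm ξ hzero).2
  have hmeas : AEStronglyMeasurable (fun ξ : En 3 => φ ((2:ℝ) ^ (-j) • ξ) • v0 ξ) volume := by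
    have hc : Continuous fun ξ : En 3 => φ ((2:ℝ) ^ (-j) • ξ) :=
      (hφ.1.continuous).comp (continuous_const_smul _)
    exact hc.aestronglyMeasurable.smul hv0
  have hbern := morrey_bernstein_s10 hq₂ hq hμ hμ' hRj0 hmeas hsupp
  rw [← hδdef, ← hβdef] at hbern
  have hmor1 := morreyNorm_le_of_le (q := q₂) (μ := μ) (by positivity : (0:ℝ) ≤ 12 * L * ej) hpoint
  -- real constant inequality
  have hrealc : 12 * L * ej * CV * Rj ^ β ≤
      12 * CV * (32 / 9 : ℝ) ^ β * C₀ * L * ν ^ σE * t ^ σE := by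
    have hRw : Rj ^ β = (32 / 9 : ℝ) ^ β * wj ^ β := by
      rw [show Rj = (32 / 9 : ℝ) * wj by rw [hRjdef, hwjdef]; ring]
      exact Real.mul_rpow (by norm_num) hwj0.le
    have hd := hdecay ν t wj hν ht hwj0
    have hνt : σE = -(β / (2 * α)) := hσE
    have hmul : ν ^ σE * t ^ σE = (ν * t) ^ (-(β / (2 * α))) := by
      rw [hνt, ← Real.mul_rpow hν.le ht.le]
    calc 12 * L * ej * CV * Rj ^ β
        = 12 * CV * (32 / 9 : ℝ) ^ β * L * (wj ^ β * ej) := by rw [hRw]; ring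
      _ ≤ 12 * CV * (32 / 9 : ℝ) ^ β * L * (C₀ * (ν * t) ^ (-(β / (2 * α)))) := by
          refine mul_le_mul_of_nonneg_left ?_ (by positivity)
          exact hd
      _ = 12 * CV * (32 / 9 : ℝ) ^ β * C₀ * L * (ν ^ σE * t ^ σE) := by
          rw [hmul]; ring
      _ = 12 * CV * (32 / 9 : ℝ) ^ β * C₀ * L * ν ^ σE * t ^ σE := by ring
  -- ENNReal chain
  have hmor : morreyNorm q₂ μ (fun ξ => φ ((2:ℝ) ^ (-j) • ξ) • applyS ν α Ω N t v0 ξ) ≤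
      ENNReal.ofReal (12 * CV * (32 / 9 : ℝ) ^ β * C₀ * L * ν ^ σE * t ^ σE) *
        morreyNorm q₁ μ (fun ξ => φ ((2:ℝ) ^ (-j) • ξ) • v0 ξ) := by
    calc morreyNorm q₂ μ (fun ξ => φ ((2:ℝ) ^ (-j) • ξ) • applyS ν α Ω N t v0 ξ)
        ≤ ENNReal.ofReal (12 * L * ej) *
          morreyNorm q₂ μ (fun ξ => φ ((2:ℝ) ^ (-j) • ξ) • v0 ξ) := hmor1
      _ ≤ ENNReal.ofReal (12 * L * ej) *
          (V ^ δ * ENNReal.ofReal (Rj ^ β) *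
            morreyNorm q₁ μ (fun ξ => φ ((2:ℝ) ^ (-j) • ξ) • v0 ξ)) :=
          mul_le_mul_right hbern _
      _ ≤ ENNReal.ofReal (12 * L * ej) *
          (ENNReal.ofReal CV * ENNReal.ofReal (Rj ^ β) *
            morreyNorm q₁ μ (fun ξ => φ ((2:ℝ) ^ (-j) • ξ) • v0 ξ)) := by
          exact mul_le_mul_right (mul_le_mul_left (mul_le_mul_left hVle _) _) _
      _ = ENNReal.ofReal (12 * L * ej) * ENNReal.ofReal CV * ENNReal.ofReal (Rj ^ β) *
          morreyNorm q₁ μ (fun ξ => φ ((2:ℝ) ^ (-j) • ξ) • v0 ξ) := by ring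
      _ = ENNReal.ofReal (12 * L * ej * CV * (Rj ^ β)) *
          morreyNorm q₁ μ (fun ξ => φ ((2:ℝ) ^ (-j) • ξ) • v0 ξ) := by
          rw [← ENNReal.ofReal_mul (by positivity), ← ENNReal.ofReal_mul (by positivity)]
      _ ≤ ENNReal.ofReal (12 * CV * (32 / 9 : ℝ) ^ β * C₀ * L * ν ^ σE * t ^ σE) *
          morreyNorm q₁ μ (fun ξ => φ ((2:ℝ) ^ (-j) • ξ) • v0 ξ) :=
          mul_le_mul_left (ENNReal.ofReal_le_ofReal hrealc) _
  calc ENNReal.ofReal ((2:ℝ) ^ ((j:ℝ) * s)) *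
      morreyNorm q₂ μ (fun ξ => φ ((2:ℝ) ^ (-j) • ξ) • applyS ν α Ω N t v0 ξ)
      ≤ ENNReal.ofReal ((2:ℝ) ^ ((j:ℝ) * s)) *
        (ENNReal.ofReal (12 * CV * (32 / 9 : ℝ) ^ β * C₀ * L * ν ^ σE * t ^ σE) *
          morreyNorm q₁ μ (fun ξ => φ ((2:ℝ) ^ (-j) • ξ) • v0 ξ)) := mul_le_mul_right hmor _
    _ = ENNReal.ofReal (12 * CV * (32 / 9 : ℝ) ^ β * C₀ * L * ν ^ σE * t ^ σE) *
        (ENNReal.ofReal ((2:ℝ) ^ ((j:ℝ) * s)) *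
          morreyNorm q₁ μ (fun ξ => φ ((2:ℝ) ^ (-j) • ξ) • v0 ξ)) := by ring

end
end
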